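/- arXiv:0704.1006 — 7 statements merged into one kernel-verified Lean document; each statement's English description precedes it below -/
import Mathlib

section
/- Let g_k, k ∈ {1,…,l}, be orientation-preserving diffeomorphisms of the circle S¹ = ℝ/ℤ (with normalized length), where g_k is of class C^{1+τ_k} with τ_k ∈ (0,1]. Let C_k be the τ_k-Hölder constant of log(g_k'), let C = max{C₁,…,C_l} and τ = max{τ₁,…,τ_l}. Fix n₀ ∈ ℕ, a choice k_n ∈ {1,…,l} for each n ≤ n₀, an interval I ⊂ S¹, and a constant S > 0 such that S ≥ ∑_{n=0}^{n₀−1} |g_{k_n} ⋯ g_{k_1}(I)|^{τ_{k_{n+1}}}. If n ≤ n₀ is such that g_{k_n} ⋯ g_{k_1}(I) does not intersect I but is contained in the L-neighborhood of I, where L := |I| / (2 exp(2^τ C S)), then the composition h_n = g_{k_n} ⋯ g_{k_1} has a hyperbolic fixed point: there exists x with h_n(x) = x and h_n'(x) ≤ 1/2. -/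
private lemma mvt_aux {f : ℝ → ℝ} {p q : ℝ} (hpq : p < q) (hf : ContDiff ℝ 1 f) :
    ∃ c ∈ Set.Ioo p q, deriv f c = (f q - f p) / (q - p) :=
  exists_deriv_eq_slope f hpq (hf.continuous.continuousOn)
    ((hf.differentiable one_ne_zero).differentiableOn)

set_option maxHeartbeats 1000000 in
/-- **Lemma 1.1 of Kleptsyn–Navas.** Circle diffeomorphisms of `S¹ = ℝ/ℤ` are encoded by
their degree-one lifts `g k : ℝ → ℝ`; an interval `I ⊆ S¹` of length `b - a < 1` is encoded
by `[a,b] ⊆ ℝ`, and the length of the arc `g_{k_n} ⋯ g_{k_1}(I)` is `h n b - h n a`, where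
`h n = g_{k_n} ∘ ⋯ ∘ g_{k_1}`. `Cm` and `τm` are the maxima of the `τ_k`-Hölder constants
`C k` of `log (g k)'` and of the exponents `τ k`. If `S ≥ ∑_{n<n₀} |h_n(I)|^{τ_{k_{n+1}}}`
and for some `n ≤ n₀` the arc `h_n(I)` does not intersect `I` (no integer translate of
`[h n a, h n b]` meets `[a,b]`) but is contained in the `L`-neighborhood of `I` (every
point of it lies within circle distance `< L` of `I`), where
`L = |I| / (2 exp(2^τm Cm S))`, then `h_n` has a hyperbolic fixed point on the circle:
a point `x` with `h n x = x + m` for some integer `m` and `(h n)'(x) ≤ 1/2`. -/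
theorem stmt2 (l : ℕ) (hl : 0 < l)
    (τ : Fin l → ℝ) (hτ0 : ∀ k, 0 < τ k) (hτ1 : ∀ k, τ k ≤ 1)
    (g : Fin l → ℝ → ℝ)
    (hC1 : ∀ k, ContDiff ℝ 1 (g k))
    (hdeg : ∀ k x, g k (x + 1) = g k x + 1)
    (hpos : ∀ k x, 0 < deriv (g k) x)
    (C : Fin l → NNReal)
    (hC : ∀ k, HolderWith (C k) (τ k).toNNReal (fun x => Real.log (deriv (g k) x)))
    (Cm τm : ℝ) (hCm : Cm = ⨆ k, (C k : ℝ)) (hτm : τm = ⨆ k, τ k)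
    (n₀ : ℕ) (k : ℕ → Fin l)
    (a b : ℝ) (hab : a < b) (hlen : b - a < 1)
    (h : ℕ → ℝ → ℝ) (h0 : h 0 = id) (hrec : ∀ n, h (n + 1) = g (k (n + 1)) ∘ h n)
    (S : ℝ) (hS : 0 < S)
    (hSsum : ∑ n ∈ Finset.range n₀, (h n b - h n a) ^ τ (k (n + 1)) ≤ S)
    (L : ℝ) (hL : L = (b - a) / (2 * Real.exp (2 ^ τm * Cm * S)))
    (n : ℕ) (hn : n ≤ n₀)
    (hdisj : ∀ m : ℤ, Disjoint (Set.Icc (h n a + m) (h n b + m)) (Set.Icc a b))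
    (hnbhd : ∀ y ∈ Set.Icc (h n a) (h n b), ∃ z ∈ Set.Icc a b, ∃ m : ℤ, |y - (z + m)| < L) :
    ∃ (x : ℝ) (m : ℤ), h n x = x + m ∧ deriv (h n) x ≤ 1 / 2 := by
  -- ### basic constants
  have hba : (0:ℝ) < b - a := sub_pos.mpr hab
  have hτm_ge : ∀ j, τ j ≤ τm := by
    intro j; rw [hτm]
    exact le_ciSup (Set.Finite.bddAbove (Set.finite_range τ)) j
  have hCm_ge : ∀ j, (C j : ℝ) ≤ Cm := by
    intro j; rw [hCm]
    exact le_ciSup (Set.Finite.bddAbove (Set.finite_range (fun j => (C j : ℝ)))) j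
  have hCm0 : 0 ≤ Cm := le_trans (C ⟨0, hl⟩).coe_nonneg (hCm_ge _)
  set E : ℝ := 2 ^ τm * Cm * S with hE
  have h2τ : (0:ℝ) < 2 ^ τm := Real.rpow_pos_of_pos two_pos _
  have hE0 : 0 ≤ E := mul_nonneg (mul_nonneg h2τ.le hCm0) hS.le
  have hexp1 : 1 ≤ Real.exp E := Real.one_le_exp hE0
  have hexp0 : 0 < Real.exp E := Real.exp_pos E
  have hL0 : 0 < L := by rw [hL]; positivity
  have h2L : 2 * L * Real.exp E = b - a := by
    rw [hL]; field_simp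
  have h2L_le : 2 * L ≤ b - a := by nlinarith
  -- ### regularity of the compositions
  have hhc : ∀ j, ContDiff ℝ 1 (h j) := by
    intro j; induction j with
    | zero => rw [h0]; exact contDiff_id
    | succ j ih => rw [hrec]; exact (hC1 _).comp ih
  have hhd : ∀ j x, DifferentiableAt ℝ (h j) x :=
    fun j x => ((hhc j).differentiable one_ne_zero).differentiableAt
  have hgd : ∀ kk x, DifferentiableAt ℝ (g kk) x :=
    fun kk x => ((hC1 kk).differentiable one_ne_zero).differentiableAt
  have hderiv : ∀ j x, deriv (h (j+1)) x = deriv (g (k (j+1))) (h j x) * deriv (h j) x := by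
    intro j x; rw [hrec]; exact ((hgd _ _).hasDerivAt.comp x (hhd _ _).hasDerivAt).deriv
  have hdpos : ∀ j x, 0 < deriv (h j) x := by
    intro j; induction j with
    | zero => intro x; rw [h0]; simp
    | succ j ih => intro x; rw [hderiv]; exact mul_pos (hpos _ _) (ih x)
  have hmonoh : ∀ j, StrictMono (h j) := fun j => strictMono_of_deriv_pos (hdpos j)
  have hd0 : ∀ j, 0 < h j b - h j a := fun j => sub_pos.mpr (hmonoh j hab)
  have hlogsum : ∀ j x, Real.log (deriv (h j) x)
      = ∑ i ∈ Finset.range j, Real.log (deriv (g (k (i+1))) (h i x)) := by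
    intro j; induction j with
    | zero => intro x; rw [h0]; simp
    | succ j ih =>
      intro x
      rw [hderiv, Real.log_mul (ne_of_gt (hpos _ _)) (ne_of_gt (hdpos _ _)),
        Finset.sum_range_succ, ih]; ring
  have hlift : ∀ j x, h j (x + 1) = h j x + 1 := by
    intro j; induction j with
    | zero => intro x; rw [h0]; simp
    | succ j ih => intro x; rw [hrec]; simp only [Function.comp_apply, ih, hdeg]
  -- ### key distortion estimate
  have key : ∀ u v : ℝ, u ≤ a → b ≤ v → (v - b) + (a - u) ≤ 2 * L →
      ∀ j ≤ n₀, ∀ x ∈ Set.Icc u v,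
        deriv (h j) x ≤ Real.exp E * ((h j b - h j a) / (b - a)) := by
    intro u v hu hv huv
    have dbound : ∀ j ≤ n₀, (∀ i, i < j → h i v - h i u ≤ 2 * (h i b - h i a)) →
        ∀ x ∈ Set.Icc u v, ∀ y ∈ Set.Icc u v,
          deriv (h j) x ≤ Real.exp E * deriv (h j) y := by
      intro j hj ih x hx y hy
      have hlogb : Real.log (deriv (h j) x) - Real.log (deriv (h j) y) ≤ E := by
        rw [hlogsum, hlogsum, ← Finset.sum_sub_distrib]
        have hterm : ∀ i ∈ Finset.range j,
            Real.log (deriv (g (k (i+1))) (h i x)) - Real.log (deriv (g (k (i+1))) (h i y))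
              ≤ Cm * (2 ^ τm * (h i b - h i a) ^ τ (k (i+1))) := by
          intro i hi
          have hi' : i < j := Finset.mem_range.mp hi
          have hmx : h i x ∈ Set.Icc (h i u) (h i v) :=
            ⟨(hmonoh i).monotone hx.1, (hmonoh i).monotone hx.2⟩
          have hmy : h i y ∈ Set.Icc (h i u) (h i v) :=
            ⟨(hmonoh i).monotone hy.1, (hmonoh i).monotone hy.2⟩
          have hd2 : dist (h i x) (h i y) ≤ 2 * (h i b - h i a) := by
            rw [Real.dist_eq, abs_sub_le_iff]
            constructor <;> linarith [ih i hi', hmx.1, hmx.2, hmy.1, hmy.2]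
          have hτc : ((τ (k (i+1))).toNNReal : ℝ) = τ (k (i+1)) :=
            Real.coe_toNNReal _ (hτ0 _).le
          have hhol := (hC (k (i+1))).dist_le (h i x) (h i y)
          rw [hτc] at hhol
          calc Real.log (deriv (g (k (i+1))) (h i x)) - Real.log (deriv (g (k (i+1))) (h i y))
              ≤ |Real.log (deriv (g (k (i+1))) (h i x)) - Real.log (deriv (g (k (i+1))) (h i y))| :=
                le_abs_self _
            _ = dist (Real.log (deriv (g (k (i+1))) (h i x)))
                  (Real.log (deriv (g (k (i+1))) (h i y))) := (Real.dist_eq _ _).symm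
            _ ≤ (C (k (i+1)) : ℝ) * dist (h i x) (h i y) ^ τ (k (i+1)) := hhol
            _ ≤ Cm * (2 * (h i b - h i a)) ^ τ (k (i+1)) := by
                apply mul_le_mul (hCm_ge _)
                  (Real.rpow_le_rpow dist_nonneg hd2 (hτ0 _).le)
                  (Real.rpow_nonneg dist_nonneg _) hCm0
            _ = Cm * (2 ^ τ (k (i+1)) * (h i b - h i a) ^ τ (k (i+1))) := by
                rw [Real.mul_rpow two_pos.le (hd0 i).le]
            _ ≤ Cm * (2 ^ τm * (h i b - h i a) ^ τ (k (i+1))) := by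
                apply mul_le_mul_of_nonneg_left _ hCm0
                apply mul_le_mul_of_nonneg_right
                  (Real.rpow_le_rpow_of_exponent_le one_le_two (hτm_ge _))
                  (Real.rpow_nonneg (hd0 i).le _)
        calc ∑ i ∈ Finset.range j,
              (Real.log (deriv (g (k (i+1))) (h i x)) - Real.log (deriv (g (k (i+1))) (h i y)))
            ≤ ∑ i ∈ Finset.range j, Cm * (2 ^ τm * (h i b - h i a) ^ τ (k (i+1))) :=
              Finset.sum_le_sum hterm
          _ = Cm * 2 ^ τm * ∑ i ∈ Finset.range j, (h i b - h i a) ^ τ (k (i+1)) := by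
              rw [Finset.mul_sum]; exact Finset.sum_congr rfl fun i _ => by ring
          _ ≤ Cm * 2 ^ τm * S := by
              apply mul_le_mul_of_nonneg_left _ (mul_nonneg hCm0 h2τ.le)
              refine le_trans ?_ hSsum
              exact Finset.sum_le_sum_of_subset_of_nonneg (Finset.range_subset_range.mpr hj)
                (fun i _ _ => Real.rpow_nonneg (hd0 i).le _)
          _ = E := by rw [hE]; ring
      calc deriv (h j) x = Real.exp (Real.log (deriv (h j) x)) :=
            (Real.exp_log (hdpos j x)).symm
        _ ≤ Real.exp (E + Real.log (deriv (h j) y)) := Real.exp_le_exp.mpr (by linarith)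
        _ = Real.exp E * deriv (h j) y := by rw [Real.exp_add, Real.exp_log (hdpos j y)]
    have width : ∀ j, j ≤ n₀ → h j v - h j u ≤ 2 * (h j b - h j a) := by
      intro j
      induction j using Nat.strong_induction_on with
      | _ j ih =>
        intro hj
        have ih' : ∀ i, i < j → h i v - h i u ≤ 2 * (h i b - h i a) :=
          fun i hi => ih i hi (le_trans hi.le hj)
        have db := dbound j hj ih'
        obtain ⟨ξ, hξ, hξd⟩ := mvt_aux hab (hhc j)
        have hξmem : ξ ∈ Set.Icc u v := ⟨le_trans hu hξ.1.le, le_trans hξ.2.le hv⟩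
        set B : ℝ := Real.exp E * ((h j b - h j a) / (b - a)) with hBdef
        have hB0 : 0 ≤ B := mul_nonneg hexp0.le (div_nonneg (hd0 j).le hba.le)
        have derbd : ∀ x ∈ Set.Icc u v, deriv (h j) x ≤ B := by
          intro x hx
          have := db x hx ξ hξmem
          rw [hξd] at this
          exact this
        have hright : h j v - h j b ≤ (v - b) * B := by
          rcases eq_or_lt_of_le hv with heq | hlt
          · rw [← heq]; simp
          · obtain ⟨c, hc, hcd⟩ := mvt_aux hlt (hhc j)
            have hcmem : c ∈ Set.Icc u v :=
              ⟨le_trans hu (le_trans hab.le hc.1.le), hc.2.le⟩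
            have h1 := derbd c hcmem
            rw [hcd, div_le_iff₀ (by linarith)] at h1
            nlinarith
        have hleft : h j a - h j u ≤ (a - u) * B := by
          rcases eq_or_lt_of_le hu with heq | hlt
          · rw [heq]; simp
          · obtain ⟨c, hc, hcd⟩ := mvt_aux hlt (hhc j)
            have hcmem : c ∈ Set.Icc u v :=
              ⟨hc.1.le, le_trans hc.2.le (le_trans hab.le hv)⟩
            have h1 := derbd c hcmem
            rw [hcd, div_le_iff₀ (by linarith)] at h1
            nlinarith
        have hkey2 : 2 * L * B = h j b - h j a := by
          rw [hBdef]
          calc 2 * L * (Real.exp E * ((h j b - h j a) / (b - a)))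
              = (2 * L * Real.exp E) * ((h j b - h j a) / (b - a)) := by ring
            _ = (b - a) * ((h j b - h j a) / (b - a)) := by rw [h2L]
            _ = h j b - h j a := by field_simp
        have hmul : (v - b) * B + (a - u) * B ≤ 2 * L * B := by
          have := mul_le_mul_of_nonneg_right huv hB0
          nlinarith
        linarith
    intro j hj x hx
    have db := dbound j hj (fun i hi => width i (le_trans hi.le hj))
    obtain ⟨ξ, hξ, hξd⟩ := mvt_aux hab (hhc j)
    have hξmem : ξ ∈ Set.Icc u v := ⟨le_trans hu hξ.1.le, le_trans hξ.2.le hv⟩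
    have := db x hx ξ hξmem
    rw [hξd] at this
    exact this
  -- ### locating the image arc : the integer m₀
  have hnab : h n a ≤ h n b := (hmonoh n).monotone hab.le
  set m₀ : ℤ := ⌊h n a - b⌋ with hm₀
  have hfl1 : (m₀ : ℝ) ≤ h n a - b := Int.floor_le _
  have hfl2 : h n a - b < m₀ + 1 := Int.lt_floor_add_one _
  have hlt1 : b + m₀ < h n a := by
    rcases eq_or_lt_of_le hfl1 with heq | hlt
    · exfalso
      have h1 : b ∈ Set.Icc (h n a + ((-m₀ : ℤ) : ℝ)) (h n b + ((-m₀ : ℤ) : ℝ)) := by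
        push_cast
        constructor <;> linarith
      exact Set.disjoint_left.mp (hdisj (-m₀)) h1 ⟨hab.le, le_refl b⟩
    · linarith
  have hlt2 : h n b < a + m₀ + 1 := by
    by_contra hcon
    push_neg at hcon
    have h2 : max a (h n a - ((m₀ : ℝ) + 1)) ∈
        Set.Icc (h n a + ((-(m₀+1) : ℤ) : ℝ)) (h n b + ((-(m₀+1) : ℤ) : ℝ)) := by
      push_cast
      constructor
      · have : h n a + (-((m₀:ℝ) + 1)) = h n a - ((m₀:ℝ)+1) := by ring
        rw [this]
        exact le_max_right _ _
      · apply max_le <;> linarith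
    have h1 : max a (h n a - ((m₀ : ℝ) + 1)) ∈ Set.Icc a b :=
      ⟨le_max_left _ _, max_le hab.le (by linarith)⟩
    exact Set.disjoint_left.mp (hdisj (-(m₀+1))) h2 h1
  -- the image length is less than the gap
  have hgap : h n b - h n a < 1 - (b - a) := by linarith
  have hcnt : Continuous fun x : ℝ => h n x - x - (m₀ : ℝ) :=
    ((hhc n).continuous.sub continuous_id).sub continuous_const
  by_cases hmerge : a + 1 ≤ b + 2 * L
  · -- merged case : derivative < 1 on an interval of length ≥ 1, contradiction
    exfalso
    have derbd := key a (b + 2*L) le_rfl (by linarith) (by linarith) n hn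
    obtain ⟨c, hc, hcd⟩ := mvt_aux (show a < a + 1 by linarith) (hhc n)
    have hc1 : deriv (h n) c = 1 := by
      rw [hcd, hlift n a]; field_simp; ring
    have hcmem : c ∈ Set.Icc a (b + 2*L) := ⟨hc.1.le, le_trans hc.2.le (by linarith)⟩
    have hbd := derbd c hcmem
    have hdn : h n b - h n a < 2 * L := by linarith
    have hlt : Real.exp E * ((h n b - h n a) / (b - a)) < 1 := by
      have h1 : Real.exp E * ((h n b - h n a) / (b - a))
          < Real.exp E * ((2 * L) / (b - a)) :=
        mul_lt_mul_of_pos_left ((div_lt_div_iff_of_pos_right hba).mpr hdn) hexp0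
      have h2 : Real.exp E * ((2 * L) / (b - a)) = 1 := by
        field_simp
        linarith [h2L]
      linarith
    rw [hc1] at hbd
    linarith
  · push_neg at hmerge  -- b + 2L < a + 1
    by_cases hA : h n b < b + m₀ + L
    · -- case A : image near the right end of I (translated by m₀)
      have derbd := key a (b + 2*L) le_rfl (by linarith) (by linarith) n hn
      have hdnL : h n b - h n a < L := by linarith
      have hbd : ∀ x ∈ Set.Icc a (b + 2*L), deriv (h n) x < 1/2 := by
        intro x hx
        have h1 := derbd x hx
        have h2 : Real.exp E * (L / (b - a)) = 1/2 := by
          field_simp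
          linarith [h2L]
        have h3 : Real.exp E * ((h n b - h n a) / (b - a)) < Real.exp E * (L / (b - a)) := by
          apply mul_lt_mul_of_pos_left _ hexp0
          exact (div_lt_div_iff_of_pos_right hba).mpr hdnL
        linarith
      obtain ⟨c, hc, hcd⟩ := mvt_aux (show b < b + 2*L by linarith) (hhc n)
      have hcb := hbd c ⟨le_trans hab.le hc.1.le, hc.2.le⟩
      rw [hcd] at hcb
      rw [div_lt_iff₀ (by linarith : (0:ℝ) < b + 2*L - b)] at hcb
      have himg : h n (b + 2*L) - h n b < L := by linarith
      have hφc : ContinuousOn (fun x => h n x - x - (m₀ : ℝ)) (Set.Icc b (b + 2*L)) :=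
        hcnt.continuousOn
      have hmem : (0:ℝ) ∈ Set.Icc (h n (b + 2*L) - (b + 2*L) - (m₀:ℝ))
          (h n b - b - (m₀:ℝ)) := by
        constructor <;> [linarith; linarith]
      obtain ⟨x, hxmem, hx0⟩ := intermediate_value_Icc' (by linarith : b ≤ b + 2*L) hφc hmem
      refine ⟨x, m₀, by dsimp at hx0; linarith, ?_⟩
      exact (hbd x ⟨le_trans hab.le hxmem.1, hxmem.2⟩).le
    · -- case B : image near the left end of the next translate of I
      push_neg at hA
      have hB : a + (m₀:ℝ) + 1 - L < h n a := by
        by_contra hc2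
        push_neg at hc2
        set y := max (h n a) (b + (m₀:ℝ) + L) with hy
        have hy1 : y ∈ Set.Icc (h n a) (h n b) :=
          ⟨le_max_left _ _, max_le hnab (by linarith)⟩
        obtain ⟨z, hz, m, hm⟩ := hnbhd y hy1
        have hyl : b + (m₀:ℝ) + L ≤ y := le_max_right _ _
        have hyr : y ≤ a + m₀ + 1 - L := max_le hc2 (by linarith)
        rcases le_or_gt m m₀ with hmle | hmgt
        · have hmle' : (m:ℝ) ≤ m₀ := Int.cast_le.mpr hmle
          have : y - (z + m) ≥ L := by linarith [hz.2]
          linarith [le_abs_self (y - (z + m))]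
        · have hmge : (m₀:ℝ) + 1 ≤ m := by exact_mod_cast hmgt
          have : (z + m) - y ≥ L := by linarith [hz.1]
          linarith [neg_abs_le (y - (z + m))]
      have derbd := key (a - 2*L) b (by linarith) le_rfl (by linarith) n hn
      have hdnL : h n b - h n a < L := by linarith
      have hbd : ∀ x ∈ Set.Icc (a - 2*L) b, deriv (h n) x < 1/2 := by
        intro x hx
        have h1 := derbd x hx
        have h2 : Real.exp E * (L / (b - a)) = 1/2 := by
          field_simp
          linarith [h2L]
        have h3 : Real.exp E * ((h n b - h n a) / (b - a)) < Real.exp E * (L / (b - a)) := by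
          apply mul_lt_mul_of_pos_left _ hexp0
          exact (div_lt_div_iff_of_pos_right hba).mpr hdnL
        linarith
      obtain ⟨c, hc, hcd⟩ := mvt_aux (show a - 2*L < a by linarith) (hhc n)
      have hcb := hbd c ⟨hc.1.le, le_trans hc.2.le hab.le⟩
      rw [hcd] at hcb
      rw [div_lt_iff₀ (by linarith : (0:ℝ) < a - (a - 2*L))] at hcb
      have himg : h n a - h n (a - 2*L) < L := by linarith
      have hφc : ContinuousOn (fun x => h n x - x - ((m₀:ℝ) + 1)) (Set.Icc (a - 2*L) a) := by
        exact (((hhc n).continuous.sub continuous_id).sub continuous_const).continuousOn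
      have hmem : (0:ℝ) ∈ Set.Icc (h n a - a - ((m₀:ℝ)+1))
          (h n (a - 2*L) - (a - 2*L) - ((m₀:ℝ)+1)) := by
        constructor <;> [linarith; linarith]
      obtain ⟨x, hxmem, hx0⟩ := intermediate_value_Icc' (by linarith : a - 2*L ≤ a) hφc hmem
      refine ⟨x, m₀ + 1, ?_, ?_⟩
      · dsimp at hx0; push_cast; linarith
      · exact (hbd x ⟨hxmem.1, le_trans hxmem.2 hab.le⟩).le
end

section
/- Let g_k, k ∈ {1,…,l}, be orientation-preserving diffeomorphisms of the circle S¹ = ℝ/ℤ (with normalized length), where g_k is of class C^{1+τ_k} with τ_k ∈ (0,1]. Let C_k be the τ_k-Hölder constant of log(g_k'), let C = max{C₁,…,C_l} and τ = max{τ₁,…,τ_l}. Fix n₀ ∈ ℕ, a choice k_n ∈ {1,…,l} for each n ≤ n₀, an interval I ⊂ S¹, and a constant S > 0 such that S ≥ ∑_{n=0}^{n₀−1} |g_{k_n} ⋯ g_{k_1}(I)|^{τ_{k_{n+1}}}. Let L := |I| / (2 exp(2^τ C S)), let J be the closed 2L-neighborhood of I, and let I' be a connected component of J ∖ I. Then for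 every j ∈ {0,…,n₀}, writing h_j = g_{k_j} ⋯ g_{k_1}: (i) |h_j(I')| ≤ |h_j(I)|, and (ii) for all x, y ∈ I ∪ I' one has h_j'(x)/h_j'(y) ≤ exp(2^τ C S). -/
/-- **The induction inside Lemma 1.1 of Kleptsyn–Navas.** Circle diffeomorphisms of
`S¹ = ℝ/ℤ` are encoded by their degree-one lifts `g k : ℝ → ℝ`; the interval `I ⊆ S¹`
of length `b - a < 1` is encoded by `[a,b] ⊆ ℝ`, and the length of the arc
`g_{k_n} ⋯ g_{k_1}(I)` is `h n b - h n a`, where `h n = g_{k_n} ∘ ⋯ ∘ g_{k_1}`.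
`Cm` and `τm` are the maxima of the `τ_k`-Hölder constants `C k` of `log (g k)'` and of
the exponents `τ k`. Let `L = |I|/(2 exp(2^τm Cm S))`, let `J = [a - 2L, b + 2L]` be the
closed `2L`-neighborhood of `I`, and let `I'` (with endpoints `u < v`) be one of the two
connected components `[a-2L, a[` and `]b, b+2L]` of `J ∖ I`. If
`S ≥ ∑_{n<n₀} |h_n(I)|^{τ_{k_{n+1}}}`, then for every `j ≤ n₀`:
(i) `|h_j(I')| ≤ |h_j(I)|`, and (ii) `h_j'(x)/h_j'(y) ≤ exp(2^τm Cm S)` for all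
`x, y ∈ I ∪ I'`. -/
theorem stmt3 (l : ℕ) (hl : 0 < l)
    (τ : Fin l → ℝ) (hτ0 : ∀ k, 0 < τ k) (hτ1 : ∀ k, τ k ≤ 1)
    (g : Fin l → ℝ → ℝ)
    (hC1 : ∀ k, ContDiff ℝ 1 (g k))
    (hdeg : ∀ k x, g k (x + 1) = g k x + 1)
    (hpos : ∀ k x, 0 < deriv (g k) x)
    (C : Fin l → NNReal)
    (hC : ∀ k, HolderWith (C k) (τ k).toNNReal (fun x => Real.log (deriv (g k) x)))
    (Cm τm : ℝ) (hCm : Cm = ⨆ k, (C k : ℝ)) (hτm : τm = ⨆ k, τ k)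
    (n₀ : ℕ) (k : ℕ → Fin l)
    (a b : ℝ) (hab : a < b) (hlen : b - a < 1)
    (h : ℕ → ℝ → ℝ) (h0 : h 0 = id) (hrec : ∀ n, h (n + 1) = g (k (n + 1)) ∘ h n)
    (S : ℝ) (hS : 0 < S)
    (hSsum : ∑ n ∈ Finset.range n₀, (h n b - h n a) ^ τ (k (n + 1)) ≤ S)
    (L : ℝ) (hL : L = (b - a) / (2 * Real.exp (2 ^ τm * Cm * S)))
    (I' : Set ℝ) (u v : ℝ)
    (hI' : (I' = Set.Ico (a - 2 * L) a ∧ u = a - 2 * L ∧ v = a) ∨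
           (I' = Set.Ioc b (b + 2 * L) ∧ u = b ∧ v = b + 2 * L)) :
    ∀ j ≤ n₀, h j v - h j u ≤ h j b - h j a ∧
      ∀ x ∈ Set.Icc a b ∪ I', ∀ y ∈ Set.Icc a b ∪ I',
        deriv (h j) x / deriv (h j) y ≤ Real.exp (2 ^ τm * Cm * S) := by
  have hfinC : BddAbove (Set.range fun kk => (C kk : ℝ)) :=
    Set.Finite.bddAbove (Set.finite_range _)
  have hfinτ : BddAbove (Set.range τ) := Set.Finite.bddAbove (Set.finite_range _)
  have hCmk : ∀ kk, (C kk : ℝ) ≤ Cm := fun kk => hCm ▸ le_ciSup hfinC kk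
  have hτmk : ∀ kk, τ kk ≤ τm := fun kk => hτm ▸ le_ciSup hfinτ kk
  have hCm0 : 0 ≤ Cm := le_trans (C ⟨0, hl⟩).coe_nonneg (hCmk _)
  have h2τm : (0:ℝ) ≤ 2 ^ τm * Cm := mul_nonneg (Real.rpow_nonneg (by norm_num) _) hCm0
  have hKpos : 0 < Real.exp (2 ^ τm * Cm * S) := Real.exp_pos _
  have hLpos : 0 < L := by
    rw [hL]; exact div_pos (by linarith) (by positivity)
  have hgdiff : ∀ kk, Differentiable ℝ (g kk) := fun kk => (hC1 kk).differentiable one_ne_zero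
  have hdiffh : ∀ n, Differentiable ℝ (h n) := by
    intro n; induction n with
    | zero => rw [h0]; exact differentiable_id
    | succ n ih => rw [hrec]; exact (hgdiff _).comp ih
  have hderivc : ∀ n x, deriv (h (n + 1)) x = deriv (g (k (n + 1))) (h n x) * deriv (h n) x := by
    intro n x
    rw [hrec]
    exact deriv_comp x ((hgdiff _).differentiableAt) ((hdiffh n).differentiableAt)
  have hdpos : ∀ n x, 0 < deriv (h n) x := by
    intro n; induction n with
    | zero => intro x; rw [h0]; simp
    | succ n ih => intro x; rw [hderivc]; exact mul_pos (hpos _ _) (ih x)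
  have hmono : ∀ n, StrictMono (h n) := fun n => strictMono_of_deriv_pos (hdpos n)
  have hd0 : ∀ n, 0 < h n b - h n a := fun n => sub_pos.mpr (hmono n hab)
  have hlogsum : ∀ n x, Real.log (deriv (h n) x) =
      ∑ i ∈ Finset.range n, Real.log (deriv (g (k (i + 1))) (h i x)) := by
    intro n; induction n with
    | zero => intro x; rw [h0]; simp
    | succ n ih =>
      intro x
      rw [Finset.sum_range_succ, hderivc, Real.log_mul (hpos _ _).ne' (hdpos n x).ne', ih x,
        add_comm]
  obtain ⟨p, q, hEsub, hIoo, huv, hpq⟩ :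
      ∃ p q : ℝ, (Set.Icc a b ∪ I' ⊆ Set.Icc p q) ∧ (Set.Ioo u v ⊆ I') ∧ v - u = 2 * L ∧
        ∀ n, h n q - h n p = (h n b - h n a) + (h n v - h n u) := by
    rcases hI' with ⟨hI, hu, hv⟩ | ⟨hI, hu, hv⟩
    · refine ⟨a - 2 * L, b, ?_, ?_, ?_, ?_⟩
      · rw [hI]
        exact Set.union_subset (Set.Icc_subset_Icc (by linarith) le_rfl)
          (fun x hx => ⟨hx.1, hx.2.le.trans hab.le⟩)
      · rw [hI, hu, hv]; exact fun x hx => ⟨hx.1.le, hx.2⟩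
      · rw [hu, hv]; ring
      · intro n; rw [hu, hv]; ring
    · refine ⟨a, b + 2 * L, ?_, ?_, ?_, ?_⟩
      · rw [hI]
        exact Set.union_subset (Set.Icc_subset_Icc le_rfl (by linarith))
          (fun x hx => ⟨hab.le.trans hx.1.le, hx.2⟩)
      · rw [hI, hu, hv]; exact fun x hx => ⟨hx.1, hx.2.le⟩
      · rw [hu, hv]; ring
      · intro n; rw [hu, hv]; ring
  intro j
  induction j using Nat.strong_induction_on with
  | _ j IH =>
  intro hjn
  -- part (ii)
  have hii : ∀ x ∈ Set.Icc a b ∪ I', ∀ y ∈ Set.Icc a b ∪ I',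
      deriv (h j) x / deriv (h j) y ≤ Real.exp (2 ^ τm * Cm * S) := by
    have hlogb : ∀ x ∈ Set.Icc a b ∪ I', ∀ y ∈ Set.Icc a b ∪ I',
        Real.log (deriv (h j) x) - Real.log (deriv (h j) y) ≤ 2 ^ τm * Cm * S := by
      intro x hx y hy
      rw [hlogsum, hlogsum, ← Finset.sum_sub_distrib]
      have hterm : ∀ i ∈ Finset.range j,
          Real.log (deriv (g (k (i + 1))) (h i x)) - Real.log (deriv (g (k (i + 1))) (h i y))
            ≤ 2 ^ τm * Cm * (h i b - h i a) ^ τ (k (i + 1)) := by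
        intro i hi
        rw [Finset.mem_range] at hi
        have hdxy : dist (h i x) (h i y) ≤ 2 * (h i b - h i a) := by
          have hiuv : h i v - h i u ≤ h i b - h i a := (IH i hi (hi.le.trans hjn)).1
          have hx' := hEsub hx
          have hy' := hEsub hy
          have h1 : h i x ≤ h i q := (hmono i).monotone hx'.2
          have h2 : h i p ≤ h i x := (hmono i).monotone hx'.1
          have h3 : h i y ≤ h i q := (hmono i).monotone hy'.2
          have h4 : h i p ≤ h i y := (hmono i).monotone hy'.1
          have := hpq i
          rw [Real.dist_eq, abs_le]
          constructor <;> linarith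
        have hHol := (hC (k (i + 1))).dist_le_of_le hdxy
        have hcoe : (((τ (k (i + 1))).toNNReal : NNReal) : ℝ) = τ (k (i + 1)) :=
          Real.coe_toNNReal _ (hτ0 _).le
        rw [hcoe] at hHol
        have h1 : Real.log (deriv (g (k (i + 1))) (h i x))
            - Real.log (deriv (g (k (i + 1))) (h i y))
            ≤ (C (k (i + 1)) : ℝ) * (2 * (h i b - h i a)) ^ τ (k (i + 1)) := by
          refine le_trans (le_abs_self _) ?_
          rw [← Real.dist_eq]
          exact hHol
        have h2 : (2 * (h i b - h i a)) ^ τ (k (i + 1))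
            = 2 ^ τ (k (i + 1)) * (h i b - h i a) ^ τ (k (i + 1)) :=
          Real.mul_rpow (by norm_num) (hd0 i).le
        have h3 : (2:ℝ) ^ τ (k (i + 1)) ≤ 2 ^ τm :=
          Real.rpow_le_rpow_of_exponent_le (by norm_num) (hτmk _)
        have h4 : (0:ℝ) ≤ (h i b - h i a) ^ τ (k (i + 1)) := Real.rpow_nonneg (hd0 i).le _
        have h5 : (0:ℝ) ≤ (2 * (h i b - h i a)) ^ τ (k (i + 1)) := Real.rpow_nonneg (mul_nonneg (by norm_num) (hd0 i).le) _
        calc Real.log (deriv (g (k (i + 1))) (h i x))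
            - Real.log (deriv (g (k (i + 1))) (h i y))
            ≤ (C (k (i + 1)) : ℝ) * (2 * (h i b - h i a)) ^ τ (k (i + 1)) := h1
          _ ≤ Cm * (2 * (h i b - h i a)) ^ τ (k (i + 1)) :=
              mul_le_mul_of_nonneg_right (hCmk _) h5
          _ = Cm * (2 ^ τ (k (i + 1)) * (h i b - h i a) ^ τ (k (i + 1))) := by rw [h2]
          _ ≤ Cm * (2 ^ τm * (h i b - h i a) ^ τ (k (i + 1))) := by
              apply mul_le_mul_of_nonneg_left _ hCm0
              exact mul_le_mul_of_nonneg_right h3 h4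
          _ = 2 ^ τm * Cm * (h i b - h i a) ^ τ (k (i + 1)) := by ring
      calc ∑ i ∈ Finset.range j, (Real.log (deriv (g (k (i + 1))) (h i x))
            - Real.log (deriv (g (k (i + 1))) (h i y)))
          ≤ ∑ i ∈ Finset.range j, 2 ^ τm * Cm * (h i b - h i a) ^ τ (k (i + 1)) :=
            Finset.sum_le_sum hterm
        _ = 2 ^ τm * Cm * ∑ i ∈ Finset.range j, (h i b - h i a) ^ τ (k (i + 1)) := by
            rw [Finset.mul_sum]
        _ ≤ 2 ^ τm * Cm * S := by
            apply mul_le_mul_of_nonneg_left _ h2τm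
            refine le_trans (Finset.sum_le_sum_of_subset_of_nonneg
              (Finset.range_subset_range.mpr hjn) ?_) hSsum
            intro i _ _
            exact Real.rpow_nonneg (hd0 i).le _
    intro x hx y hy
    have : deriv (h j) x / deriv (h j) y
        = Real.exp (Real.log (deriv (h j) x) - Real.log (deriv (h j) y)) := by
      rw [Real.exp_sub, Real.exp_log (hdpos j x), Real.exp_log (hdpos j y)]
    rw [this]
    exact Real.exp_le_exp.mpr (hlogb x hx y hy)
  refine ⟨?_, hii⟩
  -- part (i) via MVT
  have huv' : u < v := by linarith
  obtain ⟨ξ, hξ, hξeq⟩ := exists_deriv_eq_slope (h j) huv'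
    ((hdiffh j).continuous.continuousOn) ((hdiffh j).differentiableOn)
  obtain ⟨η, hη, hηeq⟩ := exists_deriv_eq_slope (h j) hab
    ((hdiffh j).continuous.continuousOn) ((hdiffh j).differentiableOn)
  have hξE : ξ ∈ Set.Icc a b ∪ I' := Or.inr (hIoo hξ)
  have hηE : η ∈ Set.Icc a b ∪ I' := Or.inl (Set.Ioo_subset_Icc_self hη)
  have hrat := hii ξ hξE η hηE
  rw [div_le_iff₀ (hdpos j η)] at hrat
  have he1 : h j v - h j u = deriv (h j) ξ * (v - u) := by
    rw [hξeq, div_mul_cancel₀ _ (sub_ne_zero.mpr huv'.ne')]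
  have he2 : h j b - h j a = deriv (h j) η * (b - a) := by
    rw [hηeq, div_mul_cancel₀ _ (sub_ne_zero.mpr hab.ne')]
  have h2LK : 2 * L * Real.exp (2 ^ τm * Cm * S) = b - a := by
    rw [hL]; field_simp
  calc h j v - h j u = deriv (h j) ξ * (2 * L) := by rw [he1, huv]
    _ ≤ Real.exp (2 ^ τm * Cm * S) * deriv (h j) η * (2 * L) :=
        mul_le_mul_of_nonneg_right hrat (by positivity)
    _ = deriv (h j) η * (2 * L * Real.exp (2 ^ τm * Cm * S)) := by ring
    _ = h j b - h j a := by rw [h2LK, ← he2]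
end

section
/- Let ℓ_{i,j} be positive real numbers, where i ∈ {1,…,m} and j ∈ {1,…,n}, whose total sum is less than or equal to 1. If τ ∈ (0,1) and A > 1, then the number of indices k ∈ {1,…,n} for which ∑_{i=1}^m ℓ_{i,k}^τ ≤ A · m^{1−τ} / n^τ is at least n(1 − 1/A). -/
/-- **Lemma 2.3 of Kleptsyn–Navas.** If positive reals `ℓ i j` have total sum at most `1`,
`τ ∈ (0,1)` and `A > 1`, then the number of columns `k` with
`∑ i, ℓ i k ^ τ ≤ A · m^(1-τ)/n^τ` is at least `n (1 - 1/A)`. -/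
theorem stmt6 (m n : ℕ) (hm : 0 < m) (hn : 0 < n)
    (ℓ : Fin m → Fin n → ℝ) (hpos : ∀ i j, 0 < ℓ i j)
    (hsum : ∑ i, ∑ j, ℓ i j ≤ 1)
    (τ : ℝ) (hτ0 : 0 < τ) (hτ1 : τ < 1) (A : ℝ) (hA : 1 < A) :
    (n : ℝ) * (1 - 1 / A) ≤
      (Nat.card {k : Fin n // ∑ i, ℓ i k ^ τ ≤ A * ((m : ℝ) ^ (1 - τ) / (n : ℝ) ^ τ)} : ℝ) := by
  have hmR : (0:ℝ) < m := by exact_mod_cast hm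
  have hnR : (0:ℝ) < n := by exact_mod_cast hn
  have hA0 : (0:ℝ) < A := by linarith
  set c : ℝ := (m : ℝ) ^ (1 - τ) / (n : ℝ) ^ τ with hc
  have hc0 : 0 < c := by positivity
  -- Step 1: total sum of τ-powers is at most n * c
  have hT : ∑ k : Fin n, ∑ i, ℓ i k ^ τ ≤ (n : ℝ) * c := by
    have hmn : (0:ℝ) < (m:ℝ) * n := by positivity
    have key := Real.arith_mean_le_rpow_mean (Finset.univ : Finset (Fin m × Fin n))
      (fun _ => 1 / ((m:ℝ)*n)) (fun p => ℓ p.1 p.2 ^ τ)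
      (fun i _ => by positivity)
      (by simp [Finset.sum_const, Finset.card_univ]; field_simp)
      (fun i _ => (Real.rpow_pos_of_pos (hpos _ _) τ).le) (p := 1/τ)
      (by rw [le_div_iff₀ hτ0]; linarith)
    have hsimp : ∀ p : Fin m × Fin n, (ℓ p.1 p.2 ^ τ) ^ (1/τ : ℝ) = ℓ p.1 p.2 := fun p => by
      rw [← Real.rpow_mul (hpos p.1 p.2).le, mul_one_div, div_self hτ0.ne', Real.rpow_one]
    simp only [← Finset.mul_sum, one_div_one_div, hsimp, Fintype.sum_prod_type] at key
    have hs0 : (0:ℝ) ≤ ∑ x : Fin m, ∑ y : Fin n, ℓ x y :=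
      Finset.sum_nonneg fun i _ => Finset.sum_nonneg fun j _ => (hpos i j).le
    have h2 : (1 / ((m:ℝ)*n) * ∑ x : Fin m, ∑ y : Fin n, ℓ x y) ^ τ ≤ ((m:ℝ)*n) ^ (-τ) := by
      have h3 : 1 / ((m:ℝ)*n) * (∑ x : Fin m, ∑ y : Fin n, ℓ x y) ≤ 1 / ((m:ℝ)*n) := by
        calc 1 / ((m:ℝ)*n) * (∑ x : Fin m, ∑ y : Fin n, ℓ x y)
            ≤ 1 / ((m:ℝ)*n) * 1 := mul_le_mul_of_nonneg_left hsum (by positivity)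
          _ = 1 / ((m:ℝ)*n) := mul_one _
      calc (1 / ((m:ℝ)*n) * ∑ x : Fin m, ∑ y : Fin n, ℓ x y) ^ τ
          ≤ (1 / ((m:ℝ)*n)) ^ τ := Real.rpow_le_rpow (by positivity) h3 hτ0.le
        _ = ((m:ℝ)*n) ^ (-τ) := by
            rw [Real.rpow_neg hmn.le, ← Real.inv_rpow hmn.le, one_div]
    have hnc : (n:ℝ) * c = ((m:ℝ)*n) ^ (1-τ) := by
      rw [hc, Real.mul_rpow hmR.le hnR.le, Real.rpow_sub hnR, Real.rpow_one]
      field_simp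
    calc ∑ k : Fin n, ∑ i, ℓ i k ^ τ
        = ((m:ℝ)*n) * (1/((m:ℝ)*n) * ∑ k : Fin n, ∑ i, ℓ i k ^ τ) := by field_simp
      _ = ((m:ℝ)*n) * (1/((m:ℝ)*n) * ∑ x : Fin m, ∑ y : Fin n, ℓ x y ^ τ) := by
          rw [Finset.sum_comm]
      _ ≤ ((m:ℝ)*n) * (((m:ℝ)*n) ^ (-τ)) :=
          mul_le_mul_of_nonneg_left (key.trans h2) hmn.le
      _ = ((m:ℝ)*n) ^ (1-τ) := by
          rw [show (1-τ : ℝ) = 1 + (-τ) by ring, Real.rpow_add hmn, Real.rpow_one]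
      _ = (n:ℝ) * c := hnc.symm
  -- Step 2: Markov
  classical
  set G : Finset (Fin n) := Finset.univ.filter (fun k => ∑ i, ℓ i k ^ τ ≤ A * c) with hG
  have hcard : (Nat.card {k : Fin n // ∑ i, ℓ i k ^ τ ≤ A * c} : ℝ) = (G.card : ℝ) := by
    rw [Nat.card_eq_fintype_card, Fintype.card_subtype]
  rw [hcard]
  -- bad columns
  have hbad : ((Finset.univ \ G).card : ℝ) * (A * c) ≤ (n:ℝ) * c := by
    have h1 : ((Finset.univ \ G).card : ℝ) * (A * c) ≤ ∑ k ∈ Finset.univ \ G, ∑ i, ℓ i k ^ τ := by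
      have := Finset.card_nsmul_le_sum (Finset.univ \ G) (fun k => ∑ i, ℓ i k ^ τ) (A * c)
        (fun k hk => by
          rw [Finset.mem_sdiff, hG, Finset.mem_filter] at hk
          exact (lt_of_not_ge (fun h => hk.2 ⟨Finset.mem_univ k, h⟩)).le)
      rwa [nsmul_eq_mul] at this
    have h2 : ∑ k ∈ Finset.univ \ G, ∑ i, ℓ i k ^ τ ≤ ∑ k : Fin n, ∑ i, ℓ i k ^ τ :=
      Finset.sum_le_sum_of_subset_of_nonneg (Finset.sdiff_subset)
        (fun i _ _ => Finset.sum_nonneg fun j _ => (Real.rpow_pos_of_pos (hpos j i) τ).le)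
    exact h1.trans (h2.trans hT)
  have hGcard : (G.card : ℝ) = (n:ℝ) - ((Finset.univ \ G).card : ℝ) := by
    have h := Finset.card_sdiff_add_card_eq_card (Finset.subset_univ G)
    rw [Finset.card_univ, Fintype.card_fin] at h
    have : ((Finset.univ \ G).card : ℝ) + (G.card : ℝ) = (n : ℝ) := by exact_mod_cast congrArg Nat.cast h
    linarith
  rw [hGcard]
  have hbad' : ((Finset.univ \ G).card : ℝ) ≤ (n:ℝ) / A := by
    have hbadA : ((Finset.univ \ G).card : ℝ) * A ≤ (n:ℝ) := by
      have : ((Finset.univ \ G).card : ℝ) * A * c ≤ (n:ℝ) * c := by linarith [hbad]; 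
      exact le_of_mul_le_mul_right this hc0
    exact (le_div_iff₀ hA0).mpr hbadA
  have : (n:ℝ) * (1 - 1/A) = (n:ℝ) - (n:ℝ)/A := by ring
  linarith
end

section
/- Fix an integer d ≥ 2 and, for m ≥ 1, rectangles R_m = [[0, x_{1,m}]] × ⋯ × [[0, x_{d,m}]] ⊂ ℕ₀^d with x_{k,m} ≥ x_{k,m−1} for every k, with strict inequality if and only if k ≡ m (mod d), starting from R₀ = {(0,…,0)}; let s(m) ∈ {1,…,d} denote the residue class of m modulo d. Suppose that inside each rectangle R_m a set 𝓛(m) of complete lines in the s(m)-direction is chosen whose proportion, among all lines in that direction inside R_m, is at least 1 − 1/A_m, where A_m > 1. If M₀ ∈ ℕ satisfies ∑_{m=1}^{M₀} 1/A_m < 1, then there exist lines L_m ∈ 𝓛(m), m ∈ {1,…,M₀}, such that L_{m+1} intersects L_m for every m < M₀. -/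
/-- The (complete) line in the `e`-direction inside the rectangle
`[[0, x 1]] × ⋯ × [[0, x d]] ⊆ ℕ₀^d` through the base point `p` (a point with `p e = 0`):
all coordinates except the `e`-th are fixed equal to those of `p`, and the `e`-th one
ranges over `[[0, x e]]`. -/
def lineIn {d : ℕ} (x : Fin d → ℕ) (e : Fin d) (p : Fin d → ℕ) : Set (Fin d → ℕ) :=
  {q | (∀ j, j ≠ e → q j = p j) ∧ q e ≤ x e}

open scoped Classical in
/-- Backward recursion: `KB s L k m` is the set of base points in `L m` that can be
extended to a compatible chain for `k` further steps. -/
noncomputable def KB {d : ℕ} (s : ℕ → Fin d) (L : ℕ → Finset (Fin d → ℕ)) :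
    ℕ → ℕ → Finset (Fin d → ℕ)
  | 0, m => L m
  | (k+1), m => (L m).filter fun p => ∃ q ∈ KB s L k (m+1),
      ∀ j, j ≠ s m → j ≠ s (m+1) → p j = q j

lemma KB_subset {d : ℕ} (s : ℕ → Fin d) (L : ℕ → Finset (Fin d → ℕ)) (k m : ℕ) :
    KB s L k m ⊆ L m := by
  cases k with
  | zero => simp [KB]
  | succ k => exact @Finset.filter_subset _ _ (fun _ => Classical.propDecidable _) _

/-- **Lemma 2.4 of Kleptsyn–Navas.** Given nested rectangles `R_m ⊆ ℕ₀^d` growing in the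
direction `s m ≡ m (mod d)` only, and inside each `R_m` (for `1 ≤ m`) a set `𝓛 m` of
complete lines in the `s m`-direction of proportion at least `1 − 1/A_m`, if
`∑_{m=1}^{M₀} 1/A_m < 1` then one can choose lines `L_m ∈ 𝓛 m`, `1 ≤ m ≤ M₀`, with
`L_{m+1}` intersecting `L_m` for every `m < M₀`. Here a set of lines in the
`s m`-direction of `R_m` is represented by the `Finset` of their base points. -/
theorem stmt8 (d : ℕ) (hd : 2 ≤ d) (x : Fin d → ℕ → ℕ)
    (hx0 : ∀ k, x k 0 = 0)
    (hmono : ∀ k, ∀ m : ℕ, 1 ≤ m →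
      x k (m - 1) ≤ x k m ∧ (x k (m - 1) < x k m ↔ (k : ℕ) = m % d))
    (s : ℕ → Fin d) (hs : ∀ m, (s m : ℕ) = m % d)
    (A : ℕ → ℝ) (hA : ∀ m, 1 < A m)
    (𝓛 : ℕ → Finset (Fin d → ℕ))
    (h𝓛base : ∀ m, 1 ≤ m → ∀ p ∈ 𝓛 m, p (s m) = 0 ∧ ∀ j, p j ≤ x j m)
    (h𝓛card : ∀ m, 1 ≤ m →
      (1 - 1 / A m) * ∏ j ∈ Finset.univ.erase (s m), ((1 : ℝ) + x j m) ≤ (𝓛 m).card)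
    (M₀ : ℕ) (hM₀ : ∑ m ∈ Finset.Icc 1 M₀, 1 / A m < 1) :
    ∃ p : ℕ → Fin d → ℕ, (∀ m, 1 ≤ m → m ≤ M₀ → p m ∈ 𝓛 m) ∧
      ∀ m, 1 ≤ m → m < M₀ →
        (lineIn (fun k => x k m) (s m) (p m) ∩
          lineIn (fun k => x k (m + 1)) (s (m + 1)) (p (m + 1))).Nonempty := by
  classical
  -- consecutive directions are distinct
  have hs_ne : ∀ m : ℕ, s m ≠ s (m+1) := by
    intro m h
    have h1 : m % d = (m+1) % d := by rw [← hs m, ← hs (m+1), h]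
    have h2 : d ∣ (m+1) - m := (Nat.modEq_iff_dvd' (Nat.le_succ m)).mp h1
    have h3 : (m+1) - m = 1 := by omega
    rw [h3] at h2
    have := Nat.le_of_dvd one_pos h2
    omega
  -- the rectangle only grows in direction s (m+1) between steps m and m+1
  have hxeq : ∀ m : ℕ, ∀ j : Fin d, j ≠ s (m+1) → x j m = x j (m+1) := by
    intro m j hj
    obtain ⟨h1, h2⟩ := hmono j (m+1) (by omega)
    have hm1 : m + 1 - 1 = m := by omega
    rw [hm1] at h1 h2
    rcases h1.lt_or_eq with hlt | heq
    · exact absurd (Fin.ext (by rw [h2.mp hlt, ← hs (m+1)])) hj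
    · exact heq
  have hxmono : ∀ m : ℕ, ∀ j : Fin d, x j m ≤ x j (m+1) := by
    intro m j
    have := (hmono j (m+1) (by omega)).1
    simpa using this
  set Nr : ℕ → ℝ := fun m => ∏ j ∈ Finset.univ.erase (s m), ((1 : ℝ) + x j m) with hNr
  have hNrpos : ∀ m, 0 < Nr m := by
    intro m
    exact Finset.prod_pos (fun j _ => by positivity)
  -- product identity
  have prodid : ∀ m : ℕ, Nr m * ((1:ℝ) + x (s m) (m+1)) = Nr (m+1) * ((1:ℝ) + x (s (m+1)) m) := by
    intro m
    have hab : s m ≠ s (m+1) := hs_ne m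
    have hbmem : s (m+1) ∈ Finset.univ.erase (s m) := by
      simp [hab.symm]
    have hamem : s m ∈ Finset.univ.erase (s (m+1)) := by
      simp [hab]
    have e1 : Nr m = ((1:ℝ) + x (s (m+1)) m) *
        ∏ j ∈ (Finset.univ.erase (s m)).erase (s (m+1)), ((1:ℝ) + x j m) := by
      rw [hNr]
      exact (Finset.mul_prod_erase _ _ hbmem).symm
    have e2 : Nr (m+1) = ((1:ℝ) + x (s m) (m+1)) *
        ∏ j ∈ (Finset.univ.erase (s (m+1))).erase (s m), ((1:ℝ) + x j (m+1)) := by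
      rw [hNr]
      exact (Finset.mul_prod_erase _ _ hamem).symm
    have e3 : ∏ j ∈ (Finset.univ.erase (s m)).erase (s (m+1)), ((1:ℝ) + x j m)
        = ∏ j ∈ (Finset.univ.erase (s (m+1))).erase (s m), ((1:ℝ) + x j (m+1)) := by
      rw [Finset.erase_right_comm]
      apply Finset.prod_congr rfl
      intro j hj
      have hjb : j ≠ s (m+1) := by
        have := Finset.mem_of_mem_erase hj
        exact Finset.ne_of_mem_erase this
      rw [hxeq m j hjb]
    rw [e1, e2, e3]; ring
  -- the key counting estimate, by downward induction
  have key : ∀ k m, 1 ≤ m → m + k = M₀ →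
      (1 - ∑ i ∈ Finset.Icc m M₀, 1 / A i) * Nr m ≤ ((KB s 𝓛 k m).card : ℝ) := by
    intro k
    induction k with
    | zero =>
      intro m hm hmk
      have hm' : m = M₀ := by omega
      subst hm'
      rw [Finset.Icc_self, Finset.sum_singleton]
      have : KB s 𝓛 0 m = 𝓛 m := by simp [KB]
      rw [this]
      exact h𝓛card m hm
    | succ k ih =>
      intro m hm hmk
      have hmM : m < M₀ := by omega
      have hab : s m ≠ s (m+1) := hs_ne m
      have hx' : ∀ j : Fin d, j ≠ s (m+1) → x j m = x j (m+1) := hxeq m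
      set Amb : Finset (Fin d → ℕ) :=
        Fintype.piFinset (fun j => if j = s (m+1) then ({0} : Finset ℕ)
          else Finset.range (x j (m+1) + 1)) with hAmb
      set T : Finset (Fin d → ℕ) :=
        Fintype.piFinset (fun j => if j = s m ∨ j = s (m+1) then ({0} : Finset ℕ)
          else Finset.range (x j (m+1) + 1)) with hT
      set π : (Fin d → ℕ) → (Fin d → ℕ) :=
        fun p j => if j = s m ∨ j = s (m+1) then 0 else p j with hπ
      set Bn : Finset (Fin d → ℕ) := KB s 𝓛 k (m+1) with hBn
      set G : Finset (Fin d → ℕ) := Bn.image π with hG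
      have hBnL : Bn ⊆ 𝓛 (m+1) := KB_subset _ _ _ _
      have hBnAmb : Bn ⊆ Amb := by
        intro q hq
        have hb := h𝓛base (m+1) (by omega) q (hBnL hq)
        rw [hAmb, Fintype.mem_piFinset]
        intro j
        by_cases hj : j = s (m+1)
        · subst hj; simp [hb.1]
        · simp only [if_neg hj, Finset.mem_range]
          exact Nat.lt_succ_of_le (hb.2 j)
      -- cardinality of ambient
      have hAmbcard : (Amb.card : ℝ) = Nr (m+1) := by
        rw [hAmb, Fintype.card_piFinset]
        rw [← Finset.mul_prod_erase _ _ (Finset.mem_univ (s (m+1)))]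
        rw [if_pos rfl, Finset.card_singleton, one_mul]
        rw [Nat.cast_prod, hNr]
        apply Finset.prod_congr rfl
        intro j hj
        rw [if_neg (Finset.ne_of_mem_erase hj), Finset.card_range]
        push_cast
        ring
      -- step 1 : missing fibers
      have hstep1 : (T \ G).card * (x (s m) (m+1) + 1) + Bn.card ≤ Amb.card := by
        have hinj : ((T \ G) ×ˢ Finset.range (x (s m) (m+1) + 1)).card ≤ (Amb \ Bn).card := by
          apply Finset.card_le_card_of_injOn (fun tv => Function.update tv.1 (s m) tv.2)
          · rintro ⟨t, v⟩ htv
            simp only [Finset.mem_coe, Finset.mem_product] at htv ⊢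
            obtain ⟨ht, hv⟩ := htv
            rw [Finset.mem_sdiff] at ht
            obtain ⟨htT, htG⟩ := ht
            rw [hT, Fintype.mem_piFinset] at htT
            have hta : t (s m) = 0 := by
              have := htT (s m); rw [if_pos (Or.inl rfl)] at this; simpa using this
            have htb : t (s (m+1)) = 0 := by
              have := htT (s (m+1)); rw [if_pos (Or.inr rfl)] at this; simpa using this
            rw [Finset.mem_sdiff]
            constructor
            · rw [hAmb, Fintype.mem_piFinset]
              intro j
              by_cases hjb : j = s (m+1)
              · subst hjb
                rw [Function.update_of_ne hab.symm, if_pos rfl]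
                simpa using htb
              · rw [if_neg hjb]
                by_cases hja : j = s m
                · subst hja
                  rw [Function.update_self]
                  exact hv
                · rw [Function.update_of_ne hja]
                  have := htT j
                  rw [if_neg (by tauto)] at this
                  exact this
            · intro hmem
              apply htG
              have hπt : π (Function.update t (s m) v) = t := by
                funext j
                simp only [hπ]
                by_cases hj : j = s m ∨ j = s (m+1)
                · rw [if_pos hj]
                  rcases hj with h | h
                  · subst h; exact hta.symm
                  · subst h; exact htb.symm
                · push_neg at hj
                  rw [if_neg (by tauto), Function.update_of_ne hj.1]
              rw [hG]
              exact Finset.mem_image.mpr ⟨_, hmem, hπt⟩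
          · rintro ⟨t, v⟩ ht ⟨t', v'⟩ ht' heq
            simp only [Finset.coe_product, Set.mem_prod, Finset.mem_coe, Finset.mem_sdiff,
              Finset.mem_range] at ht ht'
            have hta : t (s m) = 0 := by
              have := (Fintype.mem_piFinset.mp (by rw [hT] at ht; exact ht.1.1)) (s m)
              rw [if_pos (Or.inl rfl)] at this; simpa using this
            have hta' : t' (s m) = 0 := by
              have := (Fintype.mem_piFinset.mp (by rw [hT] at ht'; exact ht'.1.1)) (s m)
              rw [if_pos (Or.inl rfl)] at this; simpa using this
            have hv : v = v' := by
              have := congrFun heq (s m)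
              simpa using this
            have htt : t = t' := by
              funext j
              by_cases hj : j = s m
              · subst hj; rw [hta, hta']
              · have := congrFun heq j
                simpa only [Function.update_of_ne hj] using this
            rw [hv, htt]
        rw [Finset.card_product, Finset.card_range] at hinj
        have hsd := Finset.card_sdiff_add_card_eq_card hBnAmb
        omega
      -- membership characterization of the filtered set
      have hmemKB : ∀ p, p ∈ KB s 𝓛 (k+1) m ↔ p ∈ 𝓛 m ∧ ∃ q ∈ Bn,
          ∀ j, j ≠ s m → j ≠ s (m+1) → p j = q j := by
        intro p
        rw [hBn]
        simp [KB, Finset.mem_filter]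
      -- step 2 : bad lines at level m
      set Bad : Finset (Fin d → ℕ) := (𝓛 m).filter (fun p => π p ∉ G) with hBad
      have hsubU : 𝓛 m ⊆ KB s 𝓛 (k+1) m ∪ Bad := by
        intro p hp
        by_cases hg : π p ∈ G
        · apply Finset.mem_union_left
          rw [hmemKB]
          refine ⟨hp, ?_⟩
          rw [hG] at hg
          obtain ⟨q, hq, hqp⟩ := Finset.mem_image.mp hg
          refine ⟨q, hq, fun j hja hjb => ?_⟩
          have := congrFun hqp j
          simp only [hπ, if_neg (show ¬(j = s m ∨ j = s (m+1)) by tauto)] at this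
          exact this.symm
        · exact Finset.mem_union_right _ (Finset.mem_filter.mpr ⟨hp, hg⟩)
      have hBadcard : Bad.card ≤ (T \ G).card * (x (s (m+1)) m + 1) := by
        have hinj : Bad.card ≤ ((T \ G) ×ˢ Finset.range (x (s (m+1)) m + 1)).card := by
          apply Finset.card_le_card_of_injOn (fun p => (π p, p (s (m+1))))
          · intro p hp
            simp only [Finset.mem_coe, hBad, Finset.mem_filter] at hp ⊢
            obtain ⟨hpL, hpG⟩ := hp
            have hbase := h𝓛base m hm p hpL
            rw [Finset.mem_product]
            constructor
            · rw [Finset.mem_sdiff]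
              refine ⟨?_, hpG⟩
              rw [hT, Fintype.mem_piFinset]
              intro j
              by_cases hj : j = s m ∨ j = s (m+1)
              · rw [if_pos hj]
                simp only [hπ]
                simp [hj]
              · push_neg at hj
                rw [if_neg (by tauto)]
                simp only [hπ]
                simp only [if_neg (show ¬(j = s m ∨ j = s (m+1)) by tauto), Finset.mem_range]
                have := hbase.2 j
                rw [hx' j hj.2] at this
                omega
            · rw [Finset.mem_range]
              exact Nat.lt_succ_of_le (hbase.2 (s (m+1)))
          · intro p hp p' hp' heq
            simp only [Finset.mem_coe, hBad, Finset.mem_filter] at hp hp'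
            simp only [Prod.mk.injEq] at heq
            obtain ⟨h1, h2⟩ := heq
            have hpa : p (s m) = 0 := (h𝓛base m hm p hp.1).1
            have hpa' : p' (s m) = 0 := (h𝓛base m hm p' hp'.1).1
            funext j
            by_cases hja : j = s m
            · subst hja; rw [hpa, hpa']
            · by_cases hjb : j = s (m+1)
              · subst hjb; exact h2
              · have := congrFun h1 j
                simpa only [hπ, if_neg (show ¬(j = s m ∨ j = s (m+1)) by tauto)] using this
        rwa [Finset.card_product, Finset.card_range] at hinj
      -- now the real arithmetic
      have ihm1 : (1 - ∑ i ∈ Finset.Icc (m+1) M₀, 1 / A i) * Nr (m+1) ≤ (Bn.card : ℝ) :=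
        ih (m+1) (by omega) (by omega)
      set S2 : ℝ := ∑ i ∈ Finset.Icc (m+1) M₀, 1 / A i with hS2
      have hsplit : ∑ i ∈ Finset.Icc m M₀, 1 / A i = 1 / A m + S2 := by
        have hins : Finset.Icc m M₀ = insert m (Finset.Icc (m+1) M₀) := by
          ext i
          simp only [Finset.mem_Icc, Finset.mem_insert]
          omega
        rw [hins, Finset.sum_insert (by simp)]
      have hreal1 : ((T \ G).card : ℝ) * ((x (s m) (m+1) : ℝ) + 1) + (Bn.card : ℝ)
          ≤ Nr (m+1) := by
        rw [← hAmbcard]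
        exact_mod_cast hstep1
      have h1 : ((T \ G).card : ℝ) * ((x (s m) (m+1) : ℝ) + 1) ≤ S2 * Nr (m+1) := by
        nlinarith [hNrpos (m+1)]
      have h2 : ((T \ G).card : ℝ) * ((x (s (m+1)) m : ℝ) + 1) ≤ S2 * Nr m := by
        have hfa : (0:ℝ) < (x (s m) (m+1) : ℝ) + 1 := by positivity
        rw [← mul_le_mul_iff_of_pos_right hfa]
        have hpid := prodid m
        calc ((T \ G).card : ℝ) * ((x (s (m+1)) m : ℝ) + 1) * ((x (s m) (m+1) : ℝ) + 1)
            = (((T \ G).card : ℝ) * ((x (s m) (m+1) : ℝ) + 1)) * ((x (s (m+1)) m : ℝ) + 1) := by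
              ring
          _ ≤ (S2 * Nr (m+1)) * ((x (s (m+1)) m : ℝ) + 1) := by
              apply mul_le_mul_of_nonneg_right h1 (by positivity)
          _ = S2 * (Nr (m+1) * ((1:ℝ) + x (s (m+1)) m)) := by ring
          _ = S2 * (Nr m * ((1:ℝ) + x (s m) (m+1))) := by rw [← hpid]
          _ = S2 * Nr m * ((x (s m) (m+1) : ℝ) + 1) := by ring
      have h3 : ((𝓛 m).card : ℝ) ≤ ((KB s 𝓛 (k+1) m).card : ℝ) + S2 * Nr m := by
        have hcardle : (𝓛 m).card ≤ (KB s 𝓛 (k+1) m).card + Bad.card :=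
          le_trans (Finset.card_le_card hsubU) (Finset.card_union_le _ _)
        have hbad : (Bad.card : ℝ) ≤ S2 * Nr m := by
          calc (Bad.card : ℝ) ≤ ((T \ G).card : ℝ) * ((x (s (m+1)) m : ℝ) + 1) := by
                exact_mod_cast hBadcard
            _ ≤ S2 * Nr m := h2
        have : ((𝓛 m).card : ℝ) ≤ ((KB s 𝓛 (k+1) m).card : ℝ) + (Bad.card : ℝ) := by
          exact_mod_cast hcardle
        linarith
      have hLm : (1 - 1 / A m) * Nr m ≤ ((𝓛 m).card : ℝ) := by
        simp only [hNr]
        exact h𝓛card m hm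
      rw [hsplit]
      have hrng : (1 - (1 / A m + S2)) * Nr m = (1 - 1 / A m) * Nr m - S2 * Nr m := by ring
      rw [hrng]
      linarith
  -- handle M₀ = 0
  rcases Nat.eq_zero_or_pos M₀ with hM0 | hM0
  · refine ⟨fun _ _ => 0, ?_, ?_⟩
    · intro m h1 h2; omega
    · intro m h1 h2; omega
  -- build the chain forward
  have chain : ∀ n, 1 ≤ n → n ≤ M₀ → ∃ p : ℕ → Fin d → ℕ,
      (∀ i, 1 ≤ i → i ≤ n → p i ∈ KB s 𝓛 (M₀ - i) i) ∧
      (∀ i, 1 ≤ i → i < n → ∀ j, j ≠ s i → j ≠ s (i+1) → p i j = p (i+1) j) := by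
    intro n hn
    induction n, hn using Nat.le_induction with
    | base =>
      intro _
      have hk := key (M₀ - 1) 1 le_rfl (by omega)
      have hlt : (0:ℝ) < ((KB s 𝓛 (M₀-1) 1).card : ℝ) := by
        have h1 : (0:ℝ) < 1 - ∑ i ∈ Finset.Icc 1 M₀, 1 / A i := by linarith
        nlinarith [hNrpos 1]
      have hne : (KB s 𝓛 (M₀-1) 1).Nonempty := by
        rw [← Finset.card_pos]
        exact_mod_cast hlt
      obtain ⟨p₁, hp₁⟩ := hne
      refine ⟨fun _ => p₁, fun i h1 h2 => ?_, fun i h1 h2 => by omega⟩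
      have : i = 1 := by omega
      subst this
      exact hp₁
    | succ n hn ihn =>
      intro hnM
      obtain ⟨p, hp1, hp2⟩ := ihn (by omega)
      have hpn := hp1 n hn le_rfl
      have hrw : M₀ - n = (M₀ - (n+1)) + 1 := by omega
      rw [hrw] at hpn
      have hmem : p n ∈ 𝓛 n ∧ ∃ q ∈ KB s 𝓛 (M₀ - (n+1)) (n+1),
          ∀ j, j ≠ s n → j ≠ s (n+1) → p n j = q j := by
        simpa [KB, Finset.mem_filter] using hpn
      obtain ⟨q, hq, hcompat⟩ := hmem.2
      refine ⟨Function.update p (n+1) q, ?_, ?_⟩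
      · intro i h1 h2
        rcases Nat.lt_or_ge i (n+1) with h | h
        · rw [Function.update_of_ne (by omega)]
          exact hp1 i h1 (by omega)
        · have : i = n+1 := by omega
          subst this
          rw [Function.update_self]
          exact hq
      · intro i h1 h2 j hja hjb
        rcases Nat.lt_or_ge i n with h | h
        · have e1 : Function.update p (n+1) q i = p i :=
            Function.update_of_ne (show i ≠ n+1 by omega) q p
          have e2 : Function.update p (n+1) q (i+1) = p (i+1) :=
            Function.update_of_ne (show i+1 ≠ n+1 by omega) q p
          rw [e1, e2]
          exact hp2 i h1 h j hja hjb
        · have hin : i = n := by omega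
          have e1 : Function.update p (n+1) q i = p i :=
            Function.update_of_ne (show i ≠ n+1 by omega) q p
          have e2 : Function.update p (n+1) q (i+1) = q := by
            rw [hin]
            exact Function.update_self _ _ _
          rw [e1, e2, hin]
          have hja' : j ≠ s n := by rw [← hin]; exact hja
          have hjb' : j ≠ s (n+1) := by rw [← hin]; exact hjb
          exact hcompat j hja' hjb'
  obtain ⟨p, hp1, hp2⟩ := chain M₀ hM0 le_rfl
  refine ⟨p, fun m h1 h2 => KB_subset _ _ _ _ (hp1 m h1 h2), ?_⟩
  intro m h1 h2
  have hpmL : p m ∈ 𝓛 m := KB_subset _ _ _ _ (hp1 m h1 (by omega))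
  have hpm1L : p (m+1) ∈ 𝓛 (m+1) := KB_subset _ _ _ _ (hp1 (m+1) (by omega) (by omega))
  have hbm := h𝓛base m h1 (p m) hpmL
  have hbm1 := h𝓛base (m+1) (by omega) (p (m+1)) hpm1L
  refine ⟨Function.update (p m) (s m) (p (m+1) (s m)), ⟨?_, ?_⟩, ⟨?_, ?_⟩⟩
  · intro j hj
    exact Function.update_of_ne hj _ _
  · rw [Function.update_self]
    have h := hbm1.2 (s m)
    rwa [← hxeq m (s m) (hs_ne m)] at h
  · intro j hj
    by_cases hja : j = s m
    · subst hja
      rw [Function.update_self]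
    · rw [Function.update_of_ne hja]
      exact hp2 m h1 h2 j hja hj
  · rw [Function.update_of_ne (hs_ne m).symm]
    calc p m (s (m+1)) ≤ x (s (m+1)) m := hbm.2 (s (m+1))
      _ ≤ x (s (m+1)) (m+1) := hxmono m (s (m+1))
end

section
/- Let d ≥ 2 be an integer and let τ₁,…,τ_d ∈ (0,1) satisfy τ₁ + ⋯ + τ_d < 1. Then the series ∑_{(i₁,…,i_d) ∈ ℤ^d} 1 / (1 + |i₁|^{1/τ₁} + ⋯ + |i_d|^{1/τ_d}) converges. -/
lemma pi_summable : ∀ (n : ℕ) (g : Fin n → ℤ → ℝ), (∀ k m, 0 ≤ g k m) →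
    (∀ k, Summable (g k)) → Summable (fun i : Fin n → ℤ => ∏ k, g k (i k)) := by
  intro n
  induction n with
  | zero => intro g _ _; exact Summable.of_finite
  | succ n ih =>
    intro g hg0 hg
    have base : Summable (fun p : ℤ × (Fin n → ℤ) => g 0 p.1 * ∏ k : Fin n, g k.succ (p.2 k)) := by
      apply Summable.mul_of_nonneg (hg 0)
        (ih (fun k => g k.succ) (fun k m => hg0 _ _) (fun k => hg _))
        (fun m => hg0 _ _) (fun p => Finset.prod_nonneg fun k _ => hg0 _ _)
    have := base.comp_injective (Fin.consEquiv (fun _ : Fin (n+1) => ℤ)).symm.injective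
    apply this.congr
    intro i
    simp only [Function.comp, Fin.consEquiv_symm_apply, Fin.prod_univ_succ]
    rfl

lemma single_summable {b : ℝ} (hb : 1 < b) :
    Summable (fun n : ℤ => if n = 0 then (1 : ℝ) else |(n : ℝ)| ^ (-b)) := by
  have h1 : Summable (fun n : ℤ => |(n : ℝ)| ^ (-b)) := Real.summable_abs_int_rpow hb
  have h2 : Summable (fun n : ℤ => if n = 0 then (1 : ℝ) else 0) := by
    apply summable_of_ne_finset_zero (s := {0})
    intro n hn
    simp at hn
    simp [hn]
  have := h1.add h2
  apply this.congr
  intro n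
  by_cases hn : n = 0 <;> simp [hn, Real.zero_rpow (by linarith : -b ≠ 0)]

/-- If `d ≥ 2` and `τ₁,…,τ_d ∈ (0,1)` satisfy `τ₁ + ⋯ + τ_d < 1`, then the series
`∑_{(i₁,…,i_d) ∈ ℤ^d} 1/(1 + |i₁|^{1/τ₁} + ⋯ + |i_d|^{1/τ_d})` converges. -/
theorem stmt10 (d : ℕ) (hd : 2 ≤ d) (τ : Fin d → ℝ)
    (hτ0 : ∀ k, 0 < τ k) (hτ1 : ∀ k, τ k < 1) (hsum : ∑ k, τ k < 1) :
    Summable (fun i : Fin d → ℤ => 1 / (1 + ∑ k, |(i k : ℝ)| ^ (1 / τ k))) := by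
  have hd0 : 0 < d := by omega
  set T : ℝ := ∑ k, τ k with hT
  have hT0 : 0 < T := Finset.sum_pos (fun k _ => hτ0 k) (by simp [Finset.univ_nonempty_iff]; exact Fin.pos_iff_nonempty.mp hd0)
  have hTb : 1 < 1 / T := (one_lt_div hT0).mpr hsum
  -- the comparison functions
  set g : Fin d → ℤ → ℝ := fun k n => (1 + |(n : ℝ)| ^ (1 / τ k)) ^ (-(τ k / T)) with hgdef
  have hbase : ∀ (k : Fin d) (n : ℤ), (0:ℝ) < 1 + |(n : ℝ)| ^ (1 / τ k) := by
    intro k n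
    have : (0:ℝ) ≤ |(n : ℝ)| ^ (1 / τ k) := Real.rpow_nonneg (abs_nonneg _) _
    linarith
  have hg0 : ∀ k n, 0 ≤ g k n := fun k n => Real.rpow_nonneg (hbase k n).le _
  -- each g k is summable
  have hgsum : ∀ k, Summable (g k) := by
    intro k
    refine Summable.of_nonneg_of_le (fun n => hg0 k n) ?_ (single_summable hTb)
    · intro n
      have hτk := hτ0 k
      by_cases hn : n = 0
      · subst hn
        rw [if_pos rfl]
        show ((1:ℝ) + |((0:ℤ):ℝ)| ^ (1 / τ k)) ^ (-(τ k / T)) ≤ 1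
        rw [Int.cast_zero, abs_zero, Real.zero_rpow (one_div_ne_zero hτk.ne'), add_zero,
          Real.one_rpow]
      · simp only [hn, if_false, hgdef]
        have habs : (1 : ℝ) ≤ |(n : ℝ)| := by
          rw [← Int.cast_abs]
          exact_mod_cast Int.one_le_abs (by simpa using hn)
        have h1 : |(n : ℝ)| ^ (1 / τ k) ≤ 1 + |(n : ℝ)| ^ (1 / τ k) := by linarith
        have h2 : (0 : ℝ) < |(n : ℝ)| ^ (1 / τ k) :=
          Real.rpow_pos_of_pos (by linarith) _
        calc (1 + |(n : ℝ)| ^ (1 / τ k)) ^ (-(τ k / T))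
            ≤ (|(n : ℝ)| ^ (1 / τ k)) ^ (-(τ k / T)) :=
              Real.rpow_le_rpow_of_nonpos h2 h1 (neg_nonpos.mpr (div_nonneg hτk.le hT0.le))
          _ = |(n : ℝ)| ^ (-(1/T)) := by
              rw [← Real.rpow_mul (abs_nonneg _)]
              congr 1
              field_simp
  -- comparison
  refine Summable.of_nonneg_of_le ?_ ?_ (pi_summable d g hg0 hgsum)
  · intro i; positivity
  · intro i
    have hx : ∀ k, (0:ℝ) ≤ |(i k : ℝ)| ^ (1 / τ k) := fun k => by positivity
    set S : ℝ := ∑ k, |(i k : ℝ)| ^ (1 / τ k) with hS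
    have hS0 : 0 ≤ S := Finset.sum_nonneg fun k _ => hx k
    have key : ∏ k, (1 + |(i k : ℝ)| ^ (1 / τ k)) ^ (τ k / T) ≤ 1 + S := by
      calc ∏ k, (1 + |(i k : ℝ)| ^ (1 / τ k)) ^ (τ k / T)
          ≤ ∏ k, (1 + S) ^ (τ k / T) := by
            apply Finset.prod_le_prod
            · intro k _; exact Real.rpow_nonneg (hbase k (i k)).le _
            · intro k _
              apply Real.rpow_le_rpow (hbase k (i k)).le ?_ (div_nonneg (hτ0 k).le hT0.le)
              have : |(i k : ℝ)| ^ (1 / τ k) ≤ S :=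
                Finset.single_le_sum (fun k _ => hx k) (Finset.mem_univ k)
              linarith
        _ = (1 + S) ^ (∑ k, τ k / T) := (Real.rpow_sum_of_pos (by linarith) _ _).symm
        _ = 1 + S := by
            rw [← Finset.sum_div, ← hT, div_self (ne_of_gt hT0), Real.rpow_one]
    have hprod : ∏ k, g k (i k) = (∏ k, (1 + |(i k : ℝ)| ^ (1 / τ k)) ^ (τ k / T))⁻¹ := by
      rw [← Finset.prod_inv_distrib]
      apply Finset.prod_congr rfl
      intro k _
      show (1 + |(i k : ℝ)| ^ (1 / τ k)) ^ (-(τ k / T)) = _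
      rw [Real.rpow_neg (hbase k (i k)).le]
    rw [hprod, one_div]
    refine inv_anti₀ ?_ key
    exact Finset.prod_pos fun k _ => Real.rpow_pos_of_pos (hbase k (i k)) _
end

section
/- Let d ≥ 2 be an integer, let τ₁,…,τ_d ∈ (0,1), and for (i₁,…,i_d) ∈ ℤ^d set ℓ_{i₁,…,i_d} = 1 / (1 + |i₁|^{1/τ₁} + ⋯ + |i_d|^{1/τ_d}). Then for every k ∈ {1,…,d} and every (i₁,…,i_d) ∈ ℤ^d one has | ℓ_{i₁,…,1+i_k,…,i_d} / ℓ_{i₁,…,i_k,…,i_d} − 1 | · ℓ_{i₁,…,i_k,…,i_d}^{−τ_k} ≤ 2^{1/τ_k} / τ_k. In particular, with τ' = min{τ₁,…,τ_d}, the left-hand side is bounded by C' = 2^{1/τ'} / τ' for all k and all integer tuples. -/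
open Real Finset

lemma my_mvt_rpow (α : ℝ) (hα : 1 ≤ α) (μ : ℝ) (hμ : 0 ≤ μ) :
    (μ + 1) ^ α - μ ^ α ≤ α * (μ + 1) ^ (α - 1) := by
  have key : ∀ y ∈ Set.Icc μ (μ + 1),
      ‖(fun x : ℝ => x ^ α) y - (fun x : ℝ => x ^ α) μ‖ ≤ α * (μ + 1) ^ (α - 1) * (y - μ) := by
    apply norm_image_sub_le_of_norm_deriv_le_segment'
      (f' := fun x : ℝ => α * x ^ (α - 1))
    · intro x _
      exact (Real.hasDerivAt_rpow_const (Or.inr hα)).hasDerivWithinAt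
    · intro x hx
      have hx0 : (0:ℝ) ≤ x := le_trans hμ hx.1
      rw [Real.norm_eq_abs, abs_of_nonneg (mul_nonneg (by linarith)
        (Real.rpow_nonneg hx0 _))]
      gcongr
      · exact hx.2.le
  have h := key (μ + 1) (Set.right_mem_Icc.2 (by linarith))
  simp only [Real.norm_eq_abs] at h
  have h2 : (μ + 1) ^ α - μ ^ α ≤ |(μ + 1) ^ α - μ ^ α| := le_abs_self _
  nlinarith [h, h2]

lemma my_add_rpow (a b p : ℝ) (ha : 0 ≤ a) (hb : 0 ≤ b) (hp : 1 ≤ p) :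
    (a + b) ^ p ≤ 2 ^ (p - 1) * (a ^ p + b ^ p) := by
  have h := NNReal.rpow_add_le_mul_rpow_add_rpow a.toNNReal b.toNNReal hp
  have h2 := NNReal.coe_le_coe.2 h
  push_cast at h2
  rwa [Real.coe_toNNReal a ha, Real.coe_toNNReal b hb] at h2

lemma my_core (τ A : ℝ) (hτ0 : 0 < τ) (hτ1 : τ ≤ 1) (hA : 1 ≤ A) (n : ℤ) :
    |(1 / (A + |((1 + n : ℤ) : ℝ)| ^ (1 / τ))) / (1 / (A + |(n : ℝ)| ^ (1 / τ))) - 1| *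
      (1 / (A + |(n : ℝ)| ^ (1 / τ))) ^ (-τ) ≤ 2 ^ (1 / τ) / τ := by
  set α := 1 / τ with hα
  have hα1 : 1 ≤ α := by rw [hα, le_div_iff₀ hτ0]; linarith
  have hατ : α * τ = 1 := by rw [hα, one_div, inv_mul_cancel₀ hτ0.ne']
  -- identify min/max structure of |n|, |1+n|
  obtain ⟨μ, hμ0, hcase⟩ : ∃ μ : ℝ, 0 ≤ μ ∧
      ((|(n:ℝ)| = μ ∧ |((1 + n : ℤ) : ℝ)| = μ + 1) ∨
       (|((1 + n : ℤ) : ℝ)| = μ ∧ |(n:ℝ)| = μ + 1)) := by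
    have hn : ((1 + n).natAbs = n.natAbs + 1) ∨ (n.natAbs = (1 + n).natAbs + 1) := by omega
    have e1 : |(n:ℝ)| = (n.natAbs : ℝ) := by
      rw [Nat.cast_natAbs, Int.cast_abs]
    have e2 : |((1 + n : ℤ) : ℝ)| = ((1 + n).natAbs : ℝ) := by
      rw [Nat.cast_natAbs, Int.cast_abs]
    rcases hn with h | h
    · exact ⟨(n.natAbs : ℝ), by positivity, Or.inl ⟨e1, by rw [e2, h]; push_cast; ring⟩⟩
    · exact ⟨((1 + n).natAbs : ℝ), by positivity, Or.inr ⟨e2, by rw [e1, h]; push_cast; ring⟩⟩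
  set x := |(n:ℝ)| ^ α with hx
  set y := |((1 + n : ℤ) : ℝ)| ^ α with hy
  have hxy : (x = μ ^ α ∧ y = (μ + 1) ^ α) ∨ (y = μ ^ α ∧ x = (μ + 1) ^ α) := by
    rcases hcase with ⟨h1, h2⟩ | ⟨h1, h2⟩
    · exact Or.inl ⟨by rw [hx, h1], by rw [hy, h2]⟩
    · exact Or.inr ⟨by rw [hy, h1], by rw [hx, h2]⟩
  clear_value x y
  -- basic positivity
  have hμα : (0:ℝ) ≤ μ ^ α := Real.rpow_nonneg hμ0 _
  have hμ1α : (0:ℝ) ≤ (μ + 1) ^ α := Real.rpow_nonneg (by linarith) _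
  have hle : μ ^ α ≤ (μ + 1) ^ α := Real.rpow_le_rpow hμ0 (by linarith) (by linarith)
  have hx0 : 0 ≤ x := by rcases hxy with ⟨h, _⟩ | ⟨_, h⟩ <;> rw [h] <;> assumption
  have hy0 : 0 ≤ y := by rcases hxy with ⟨_, h⟩ | ⟨h, _⟩ <;> rw [h] <;> assumption
  set S := A + x with hS
  set S' := A + y with hS'
  have hSpos : 0 < S := by rw [hS]; linarith
  have hS'pos : 0 < S' := by rw [hS']; linarith
  have hS'1 : 1 ≤ S' := by rw [hS']; linarith
  -- the difference
  have habs : |1 / S' / (1 / S) - 1| = ((μ + 1) ^ α - μ ^ α) / S' := by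
    have e : 1 / S' / (1 / S) - 1 = (S - S') / S' := by
      field_simp
    rw [e, abs_div, abs_of_pos hS'pos]
    congr 1
    rcases hxy with ⟨h1, h2⟩ | ⟨h1, h2⟩
    · rw [hS, hS', h1, h2, abs_of_nonpos (by linarith), neg_sub]; ring
    · rw [hS, hS', h1, h2, abs_of_nonneg (by linarith)]; ring
  have hpow : (1 / S) ^ (-τ) = S ^ τ := by
    rw [one_div, Real.inv_rpow hSpos.le, Real.rpow_neg hSpos.le, inv_inv]
  rw [habs, hpow]
  -- key comparison facts
  have h2pos : (0:ℝ) < 2 ^ α := Real.rpow_pos_of_pos two_pos α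
  have h2a1 : (1:ℝ) ≤ 2 ^ (α - 1) := Real.one_le_rpow one_le_two (by linarith)
  have h2a : (2:ℝ) ^ α = 2 * 2 ^ (α - 1) := by
    nth_rewrite 1 [show α = 1 + (α - 1) by ring]
    rw [Real.rpow_add two_pos, Real.rpow_one]
  have hconv : (μ + 1) ^ α ≤ 2 ^ (α - 1) * (μ ^ α + 1) := by
    have := my_add_rpow μ 1 α hμ0 zero_le_one hα1
    rwa [Real.one_rpow] at this
  have hH : A + (μ + 1) ^ α ≤ 2 ^ α * (A + μ ^ α) := by nlinarith
  have hxle : x ≤ (μ + 1) ^ α := by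
    rcases hxy with ⟨h, _⟩ | ⟨_, h⟩ <;> rw [h]
    exact hle
  have hyge : μ ^ α ≤ y := by
    rcases hxy with ⟨_, h⟩ | ⟨h, _⟩ <;> rw [h]
    exact hle
  have hSup : S ≤ 2 ^ α * S' := by
    rw [hS, hS']
    nlinarith
  have h1' : (μ + 1) ^ α ≤ 2 ^ α * S' := by
    rw [hS']
    nlinarith
  have hΔ : (μ + 1) ^ α - μ ^ α ≤ α * ((μ + 1) ^ α) ^ (1 - τ) := by
    calc (μ + 1) ^ α - μ ^ α ≤ α * (μ + 1) ^ (α - 1) := my_mvt_rpow α hα1 μ hμ0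
      _ = α * ((μ + 1) ^ α) ^ (1 - τ) := by
          rw [← Real.rpow_mul (by linarith : (0:ℝ) ≤ μ + 1),
            show α * (1 - τ) = α - 1 by linear_combination -hατ]
  have hmain : ((μ + 1) ^ α - μ ^ α) * S ^ τ ≤ α * (2 ^ α * S') := by
    have hb : S ^ τ ≤ (2 ^ α * S') ^ τ := Real.rpow_le_rpow hSpos.le hSup hτ0.le
    have hc : ((μ + 1) ^ α) ^ (1 - τ) ≤ (2 ^ α * S') ^ (1 - τ) :=
      Real.rpow_le_rpow hμ1α h1' (by linarith)
    have step : ((μ + 1) ^ α - μ ^ α) * S ^ τ ≤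
        (α * (2 ^ α * S') ^ (1 - τ)) * (2 ^ α * S') ^ τ := by
      apply mul_le_mul (le_trans hΔ ?_) hb (Real.rpow_nonneg hSpos.le _) ?_
      · gcongr
      · positivity
    calc ((μ + 1) ^ α - μ ^ α) * S ^ τ ≤ (α * (2 ^ α * S') ^ (1 - τ)) * (2 ^ α * S') ^ τ := step
      _ = α * (2 ^ α * S') ^ ((1 - τ) + τ) := by
          rw [mul_assoc, ← Real.rpow_add (by positivity)]
      _ = α * (2 ^ α * S') := by rw [sub_add_cancel, Real.rpow_one]
  rw [div_mul_eq_mul_div, div_le_iff₀ hS'pos]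
  have e : 2 ^ α / τ * S' = α * (2 ^ α * S') := by rw [hα]; ring
  rw [e]
  exact hmain



/-- For `d ≥ 2`, `τ₁,…,τ_d ∈ (0,1)` and
`ℓ_{i₁,…,i_d} = 1/(1 + |i₁|^{1/τ₁} + ⋯ + |i_d|^{1/τ_d})`, one has, for every `k` and
every integer tuple, `|ℓ_{…,1+i_k,…}/ℓ_{…,i_k,…} − 1| · ℓ_{…,i_k,…}^{−τ_k} ≤ 2^{1/τ_k}/τ_k`;
in particular the left-hand side is bounded by `2^{1/τ'}/τ'` with `τ' = min τ_k`. -/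
theorem stmt11 (d : ℕ) (hd : 2 ≤ d) (τ : Fin d → ℝ)
    (hτ0 : ∀ k, 0 < τ k) (hτ1 : ∀ k, τ k < 1)
    (ℓ : (Fin d → ℤ) → ℝ)
    (hℓ : ∀ i, ℓ i = 1 / (1 + ∑ k, |(i k : ℝ)| ^ (1 / τ k))) :
    (∀ (k : Fin d) (i : Fin d → ℤ),
      |ℓ (Function.update i k (1 + i k)) / ℓ i - 1| * ℓ i ^ (-τ k) ≤ 2 ^ (1 / τ k) / τ k) ∧
    (∀ (k : Fin d) (i : Fin d → ℤ),
      |ℓ (Function.update i k (1 + i k)) / ℓ i - 1| * ℓ i ^ (-τ k) ≤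
        2 ^ (1 / ⨅ j, τ j) / ⨅ j, τ j) := by
  have main : ∀ (k : Fin d) (i : Fin d → ℤ),
      |ℓ (Function.update i k (1 + i k)) / ℓ i - 1| * ℓ i ^ (-τ k) ≤ 2 ^ (1 / τ k) / τ k := by
    intro k i
    set A : ℝ := 1 + ∑ j ∈ Finset.univ.erase k, |(i j : ℝ)| ^ (1 / τ j) with hAdef
    have hA : 1 ≤ A := by
      rw [hAdef]
      have : (0:ℝ) ≤ ∑ j ∈ Finset.univ.erase k, |(i j : ℝ)| ^ (1 / τ j) :=
        Finset.sum_nonneg fun j _ => Real.rpow_nonneg (abs_nonneg _) _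
      linarith
    have e1 : ℓ i = 1 / (A + |(i k : ℝ)| ^ (1 / τ k)) := by
      rw [hℓ i, ← Finset.add_sum_erase _ _ (Finset.mem_univ k), hAdef]
      ring
    have e2 : ℓ (Function.update i k (1 + i k)) =
        1 / (A + |((1 + i k : ℤ) : ℝ)| ^ (1 / τ k)) := by
      rw [hℓ, ← Finset.add_sum_erase _ _ (Finset.mem_univ k), Function.update_self, hAdef]
      have : ∑ j ∈ Finset.univ.erase k, |((Function.update i k (1 + i k) j : ℤ) : ℝ)| ^ (1 / τ j)
          = ∑ j ∈ Finset.univ.erase k, |(i j : ℝ)| ^ (1 / τ j) := by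
        apply Finset.sum_congr rfl
        intro j hj
        rw [Function.update_of_ne (Finset.ne_of_mem_erase hj)]
      rw [this]
      ring
    rw [e1, e2]
    exact my_core (τ k) A (hτ0 k) (hτ1 k).le hA (i k)
  refine ⟨main, fun k i => le_trans (main k i) ?_⟩
  have hne : Nonempty (Fin d) := ⟨⟨0, by omega⟩⟩
  have hbdd : BddBelow (Set.range τ) := (Set.finite_range τ).bddBelow
  have hle : (⨅ j, τ j) ≤ τ k := ciInf_le hbdd k
  have hpos : 0 < ⨅ j, τ j := by
    obtain ⟨j, hj⟩ := Finite.exists_min τ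
    exact lt_of_lt_of_le (hτ0 j) (le_ciInf hj)
  apply div_le_div₀ (by positivity) ?_ hpos hle
  exact (Real.rpow_le_rpow_left_iff one_lt_two).2 (one_div_le_one_div_of_le hpos hle)
end

section
/- Let τ ∈ (0,1). Then for every integer a ≥ 1 one has (a^{1/τ} − (a−1)^{1/τ}) / (1 + (a−1)^{1/τ})^{1−τ} · ( (1 + a^{1/τ}) / (1 + (a−1)^{1/τ}) )^τ ≤ 2^{1/τ} / τ. -/
/-- Convexity-type bound: `(1+b)^β ≤ 2^(β-1) * (1 + b^β)` for `b ≥ 0`, `β ≥ 1`. -/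
lemma aux_conv (b : ℝ) (hb : 0 ≤ b) (β : ℝ) (hβ : 1 ≤ β) :
    (1 + b) ^ β ≤ 2 ^ (β - 1) * (1 + b ^ β) := by
  have h := NNReal.rpow_add_le_mul_rpow_add_rpow 1 b.toNNReal hβ
  have := NNReal.coe_le_coe.2 h
  push_cast [NNReal.coe_rpow] at this
  simpa [Real.coe_toNNReal _ hb] using this

/-- For `τ ∈ (0,1)` and every integer `a ≥ 1`,
`(a^{1/τ} − (a−1)^{1/τ}) / (1 + (a−1)^{1/τ})^{1−τ} · ((1 + a^{1/τ})/(1 + (a−1)^{1/τ}))^τ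
  ≤ 2^{1/τ}/τ`. -/
theorem stmt13 (τ : ℝ) (hτ0 : 0 < τ) (hτ1 : τ < 1) (a : ℕ) (ha : 1 ≤ a) :
    ((a : ℝ) ^ (1 / τ) - ((a : ℝ) - 1) ^ (1 / τ)) / (1 + ((a : ℝ) - 1) ^ (1 / τ)) ^ (1 - τ) *
      ((1 + (a : ℝ) ^ (1 / τ)) / (1 + ((a : ℝ) - 1) ^ (1 / τ))) ^ τ ≤ 2 ^ (1 / τ) / τ := by
  have hA : (1:ℝ) ≤ (a:ℝ) := by exact_mod_cast ha
  set A : ℝ := (a : ℝ) with hAdef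
  set β : ℝ := 1 / τ with hβdef
  have hβ : 1 < β := one_lt_one_div hτ0 hτ1
  have hA0 : (0:ℝ) < A := by linarith
  have hb0 : (0:ℝ) ≤ A - 1 := by linarith
  have hx0 : 0 ≤ (A - 1) ^ β := Real.rpow_nonneg hb0 _
  have hy1 : 1 ≤ A ^ β := Real.one_le_rpow hA (by linarith)
  have h1x : (0:ℝ) < 1 + (A - 1) ^ β := by linarith
  have h1y : (0:ℝ) < 1 + A ^ β := by linarith
  have hxy : (A - 1) ^ β ≤ A ^ β := Real.rpow_le_rpow hb0 (by linarith) (by linarith)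
  -- step 1 : A^β - (A-1)^β ≤ β * A^(β-1)
  have step1 : A ^ β - (A - 1) ^ β ≤ β * A ^ (β - 1) := by
    have hs : (-1 : ℝ) ≤ (A - 1) / A - 1 := by
      have : 0 ≤ (A - 1) / A := div_nonneg hb0 hA0.le
      linarith
    have hber := one_add_mul_self_le_rpow_one_add hs hβ.le
    rw [add_sub_cancel] at hber
    have hdiv : ((A - 1) / A) ^ β = (A - 1) ^ β / A ^ β :=
      Real.div_rpow hb0 hA0.le β
    rw [hdiv] at hber
    -- hber : 1 + β * ((A-1)/A - 1) ≤ (A-1)^β / A^β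
    have hmul := mul_le_mul_of_nonneg_right hber (Real.rpow_nonneg hA0.le β)
    rw [div_mul_cancel₀ _ (ne_of_gt (Real.rpow_pos_of_pos hA0 β))] at hmul
    have hAβ1 : A ^ (β - 1) = A ^ β / A := by
      rw [Real.rpow_sub hA0, Real.rpow_one]
    have hexp : (1 + β * ((A - 1) / A - 1)) * A ^ β
        = A ^ β - β * (A ^ β / A) := by
      field_simp
      ring
    rw [hexp] at hmul
    rw [hAβ1]
    linarith
  -- step 2 : 2^(1-β) * A^β ≤ 1 + (A-1)^β
  have step2 : (2:ℝ) ^ (1 - β) * A ^ β ≤ 1 + (A - 1) ^ β := by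
    have h := aux_conv (A - 1) hb0 β hβ.le
    rw [add_sub_cancel] at h
    have h2pos : (0:ℝ) < (2:ℝ) ^ (β - 1) := Real.rpow_pos_of_pos two_pos _
    have h21 : (2:ℝ) ^ (1 - β) = ((2:ℝ) ^ (β - 1))⁻¹ := by
      rw [← Real.rpow_neg (by norm_num)]
      norm_num
    rw [h21]
    rw [inv_mul_le_iff₀ h2pos]
    linarith [h]
  -- step 3 : (1 + A^β)^τ ≤ 2^τ * A
  have step3 : (1 + A ^ β) ^ τ ≤ 2 ^ τ * A := by
    have h3 : 1 + A ^ β ≤ 2 * A ^ β := by linarith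
    have := Real.rpow_le_rpow h1y.le h3 hτ0.le
    calc (1 + A ^ β) ^ τ ≤ (2 * A ^ β) ^ τ := this
      _ = 2 ^ τ * (A ^ β) ^ τ := Real.mul_rpow (by norm_num) (Real.rpow_nonneg hA0.le _)
      _ = 2 ^ τ * A := by
          rw [← Real.rpow_mul hA0.le]
          rw [hβdef, one_div, inv_mul_cancel₀ (ne_of_gt hτ0), Real.rpow_one]
  -- rewrite LHS as (y - x) * (1 + y)^τ / (1 + x)
  have hLHS : (A ^ β - (A - 1) ^ β) / (1 + (A - 1) ^ β) ^ (1 - τ) *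
      ((1 + A ^ β) / (1 + (A - 1) ^ β)) ^ τ
      = (A ^ β - (A - 1) ^ β) * (1 + A ^ β) ^ τ / (1 + (A - 1) ^ β) := by
    rw [Real.div_rpow h1y.le h1x.le, div_mul_div_comm, ← Real.rpow_add h1x]
    norm_num
  rw [hLHS]
  -- combine the bounds
  have hnum : (A ^ β - (A - 1) ^ β) * (1 + A ^ β) ^ τ
      ≤ (β * A ^ (β - 1)) * (2 ^ τ * A) := by
    apply mul_le_mul step1 step3 (Real.rpow_nonneg h1y.le τ)
    positivity
  have hden : (0:ℝ) < (2:ℝ) ^ (1 - β) * A ^ β := by positivity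
  calc (A ^ β - (A - 1) ^ β) * (1 + A ^ β) ^ τ / (1 + (A - 1) ^ β)
      ≤ (β * A ^ (β - 1)) * (2 ^ τ * A) / ((2:ℝ) ^ (1 - β) * A ^ β) := by
        apply div_le_div₀ (by positivity) hnum hden step2
    _ = β * ((2:ℝ) ^ τ / 2 ^ (1 - β)) * (A ^ (β - 1) * A / A ^ β) := by ring
    _ = β * (2:ℝ) ^ (τ - (1 - β)) := by
        rw [← Real.rpow_sub two_pos]
        have : A ^ (β - 1) * A = A ^ β := by
          rw [Real.rpow_sub hA0, Real.rpow_one, div_mul_cancel₀]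
          exact ne_of_gt hA0
        rw [this, div_self (ne_of_gt (Real.rpow_pos_of_pos hA0 β)), mul_one]
    _ ≤ β * (2:ℝ) ^ β := by
        apply mul_le_mul_of_nonneg_left _ (by linarith)
        exact Real.rpow_le_rpow_of_exponent_le (by norm_num) (by linarith)
    _ = 2 ^ β / τ := by rw [hβdef]; field_simp
end
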